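/- arXiv:math/0408023 — 7 statements merged into one kernel-verified Lean document; each statement's English description precedes it below -/
import Mathlib

section
/- Let f ∈ ℝ[[x₁,…,xₙ]] be a formal power series and let 𝔞 be an ideal of ℝ[[x₁,…,xₙ]] containing the Jacobian ideal Δ(f). Set A = ℝ[[x₁,…,xₙ]]/𝔞 and let a = [f] ∈ A be the class of f. Then every ℝ-linear derivation D : A → A that is continuous with respect to the topology on A defined by the powers of its maximal ideal satisfies D(a) = 0. -/
/-- The `i`-th formal partial derivative of a multivariate formal power series over `ℝ`. -/
noncomputable def mvPderiv {n : ℕ} (i : Fin n) (f : MvPowerSeries (Fin n) ℝ) :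
    MvPowerSeries (Fin n) ℝ :=
  fun m => (m i + 1 : ℝ) * MvPowerSeries.coeff (m + Finsupp.single i 1) f

/-- The Jacobian ideal Δ(f), generated by the formal partial derivatives of `f`. -/
noncomputable def jacobianIdeal {n : ℕ} (f : MvPowerSeries (Fin n) ℝ) :
    Ideal (MvPowerSeries (Fin n) ℝ) :=
  Ideal.span (Set.range fun i => mvPderiv i f)

/-- The maximal ideal of the quotient `ℝ[[x₁,…,xₙ]]/𝔞`: the image of the ideal of power
series with vanishing constant term. -/
noncomputable def maxIdealQuot {n : ℕ} (𝔞 : Ideal (MvPowerSeries (Fin n) ℝ)) :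
    Ideal (MvPowerSeries (Fin n) ℝ ⧸ 𝔞) :=
  Ideal.map (Ideal.Quotient.mk 𝔞) (RingHom.ker (MvPowerSeries.constantCoeff (σ := Fin n) (R := ℝ)))


section Auxiliary

open PowerSeries

theorem powerSeries_isNoetherianRing (R : Type*) [CommRing R] [IsNoetherianRing R] :
    IsNoetherianRing (PowerSeries R) := by
  classical
  rw [isNoetherianRing_iff_ideal_fg]
  intro I
  set L : ℕ → Ideal R := fun i =>
    { carrier := {a | ∃ f, f ∈ I ∧ (∀ j < i, PowerSeries.coeff j f = 0) ∧
        PowerSeries.coeff i f = a}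
      add_mem' := by
        rintro a b ⟨f, hfI, hf0, rfl⟩ ⟨g, hgI, hg0, rfl⟩
        exact ⟨f + g, I.add_mem hfI hgI, fun j hj => by simp [hf0 j hj, hg0 j hj], by simp⟩
      zero_mem' := ⟨0, I.zero_mem, fun j _ => by simp, by simp⟩
      smul_mem' := by
        rintro c a ⟨f, hfI, hf0, rfl⟩
        refine ⟨PowerSeries.C c * f, I.mul_mem_left _ hfI, fun j hj => ?_, by simp⟩
        simp [hf0 j hj] } with hL
  have hLmem : ∀ (i : ℕ) (a : R), a ∈ L i ↔ ∃ f, f ∈ I ∧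
      (∀ j < i, PowerSeries.coeff j f = 0) ∧ PowerSeries.coeff i f = a := fun i a => Iff.rfl
  have hmono : Monotone L := by
    refine monotone_nat_of_le_succ fun i a ha => ?_
    obtain ⟨f, hfI, hf0, rfl⟩ := (hLmem i a).1 ha
    refine (hLmem _ _).2 ⟨X * f, I.mul_mem_left _ hfI, fun j hj => ?_, ?_⟩
    · rw [show X * f = X ^ 1 * f by ring, PowerSeries.coeff_X_pow_mul']
      split_ifs with h
      · exact hf0 _ (by omega)
      · rfl
    · rw [show X * f = X ^ 1 * f by ring, PowerSeries.coeff_X_pow_mul']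
      simp
  obtain ⟨N, hN⟩ := (monotone_stabilizes_iff_noetherian.2 inferInstance) ⟨L, hmono⟩
  have hstab : ∀ t, N ≤ t → L t = L N := fun t ht => (hN t ht).symm
  -- finite generating sets for the `L i`
  have hfg : ∀ i, (L i).FG := fun i => (isNoetherianRing_iff_ideal_fg R).1 inferInstance (L i)
  choose S hS using hfg
  -- a total witness function
  set w : ℕ → R → PowerSeries R := fun k a =>
    if h : ∃ f, f ∈ I ∧ (∀ j < k, PowerSeries.coeff j f = 0) ∧ PowerSeries.coeff k f = a
    then h.choose else 0 with hw
  have hwspec : ∀ (k : ℕ) (a : R), a ∈ L k → w k a ∈ I ∧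
      (∀ j < k, PowerSeries.coeff j (w k a) = 0) ∧ PowerSeries.coeff k (w k a) = a := by
    intro k a ha
    have h := (hLmem k a).1 ha
    rw [hw]
    simp only [dif_pos h]
    exact h.choose_spec
  have hSsub : ∀ k, (S k : Set R) ⊆ L k := fun k => hS k ▸ Ideal.subset_span
  -- the generating set
  set G : Set (PowerSeries R) := ⋃ k ∈ Set.Iic N, (w k) '' (S k : Set R) with hG
  have hGfin : G.Finite := Set.Finite.biUnion (Set.finite_Iic N)
    (fun k _ => ((S k).finite_toSet.image _))
  have hGmem : ∀ k, k ≤ N → ∀ a ∈ S k, w k a ∈ G := by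
    intro k hk a ha
    exact Set.mem_biUnion hk ⟨a, ha, rfl⟩
  -- the key reduction lemma
  have key : ∀ (k t : ℕ), k ≤ N → k ≤ t → L t = L k → ∀ g, g ∈ I →
      (∀ j < t, PowerSeries.coeff j g = 0) →
      ∃ c : R → R,
        (g - ∑ a ∈ S k, PowerSeries.C (c a) * X ^ (t - k) * w k a) ∈ I ∧
        (∀ j < t + 1, PowerSeries.coeff j
          (g - ∑ a ∈ S k, PowerSeries.C (c a) * X ^ (t - k) * w k a) = 0) := by
    intro k t hkN hkt hLt g hgI hg0
    have hmemt : PowerSeries.coeff t g ∈ L t := (hLmem t _).2 ⟨g, hgI, hg0, rfl⟩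
    rw [hLt, ← hS k] at hmemt
    obtain ⟨c, -, hc⟩ := Submodule.mem_span_finset.1 hmemt
    refine ⟨c, ?_, ?_⟩
    · exact I.sub_mem hgI (Ideal.sum_mem _ fun a ha => I.mul_mem_left _ (hwspec k a (hSsub k ha)).1)
    · intro j hj
      have hterm : ∀ a ∈ S k, PowerSeries.coeff j
          (PowerSeries.C (c a) * X ^ (t - k) * w k a) =
          c a * (if t - k ≤ j then PowerSeries.coeff (j - (t - k)) (w k a) else 0) := by
        intro a _
        rw [mul_assoc, PowerSeries.coeff_C_mul, PowerSeries.coeff_X_pow_mul']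
      rw [map_sub, map_sum]
      rcases lt_or_eq_of_le (Nat.lt_succ_iff.1 hj) with hjt | hjt
      · rw [hg0 j hjt, Finset.sum_congr rfl hterm]
        have : ∀ a ∈ S k, c a * (if t - k ≤ j then
            PowerSeries.coeff (j - (t - k)) (w k a) else 0) = 0 := by
          intro a ha
          split_ifs with h
          · rw [(hwspec k a (hSsub k ha)).2.1 _ (by omega), mul_zero]
          · rw [mul_zero]
        rw [Finset.sum_congr rfl this, Finset.sum_const_zero, zero_sub, neg_zero]
      · subst hjt
        rw [Finset.sum_congr rfl hterm]
        have : ∀ a ∈ S k, c a * (if j - k ≤ j then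
            PowerSeries.coeff (j - (j - k)) (w k a) else 0) = c a * a := by
          intro a ha
          rw [if_pos (by omega), show j - (j - k) = k by omega, (hwspec k a (hSsub k ha)).2.2]
        rw [Finset.sum_congr rfl this, ← hc]
        simp [smul_eq_mul]
  -- it suffices to show that `I` is spanned by `G`
  suffices hIG : I = Ideal.span G by
    rw [hIG]
    exact Submodule.fg_def.2 ⟨G, hGfin, rfl⟩
  refine le_antisymm ?_ ?_
  · -- `I ≤ span G`
    intro g hgI
    have stage1 : ∀ i, i ≤ N → ∃ g', g' ∈ I ∧ (∀ j < i, PowerSeries.coeff j g' = 0) ∧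
        g - g' ∈ Ideal.span G := by
      intro i
      induction i with
      | zero => exact fun _ => ⟨g, hgI, by omega, by simp⟩
      | succ i ih =>
        intro hi
        obtain ⟨g', hg'I, hg'0, hg'span⟩ := ih (by omega)
        obtain ⟨c, hc1, hc2⟩ := key i i (by omega) le_rfl rfl g' hg'I hg'0
        refine ⟨g' - ∑ a ∈ S i, PowerSeries.C (c a) * X ^ (i - i) * w i a, hc1, hc2, ?_⟩
        have hu : (∑ a ∈ S i, PowerSeries.C (c a) * X ^ (i - i) * w i a) ∈ Ideal.span G :=
          Ideal.sum_mem _ fun a ha => Ideal.mul_mem_left _ _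
            (Ideal.subset_span (hGmem i (by omega) a ha))
        have : g - (g' - ∑ a ∈ S i, PowerSeries.C (c a) * X ^ (i - i) * w i a) =
            (g - g') + ∑ a ∈ S i, PowerSeries.C (c a) * X ^ (i - i) * w i a := by ring
        rw [this]
        exact Ideal.add_mem _ hg'span hu
    obtain ⟨g', hg'I, hg'0, hg'span⟩ := stage1 N le_rfl
    suffices hg' : g' ∈ Ideal.span G by
      have := Ideal.add_mem _ hg'span hg'
      simpa using this
    -- stage 2 : the recursive construction
    let T : ℕ → Type _ := fun s => {p : PowerSeries R × (R → R) //
      p.1 ∈ I ∧ ∀ j < N + s, PowerSeries.coeff j p.1 = 0}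
    let step : ∀ s, T s → T (s + 1) := fun s p =>
      let hkey := key N (N + s) le_rfl (Nat.le_add_right N s)
        (hstab _ (Nat.le_add_right N s)) p.1.1 p.2.1 p.2.2
      ⟨(p.1.1 - ∑ a ∈ S N, PowerSeries.C (hkey.choose a) * X ^ (N + s - N) * w N a,
        hkey.choose), hkey.choose_spec.1, hkey.choose_spec.2⟩
    let F : ∀ s, T s := fun s => Nat.rec (motive := T) ⟨(g', 0), hg'I, hg'0⟩ step s
    have hFrec : ∀ s, (F (s + 1)).1.1 = (F s).1.1 -
        ∑ a ∈ S N, PowerSeries.C ((F (s + 1)).1.2 a) * X ^ (N + s - N) * w N a :=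
      fun s => rfl
    have hF2 : ∀ s j, j < N + s → PowerSeries.coeff j (F s).1.1 = 0 := fun s => (F s).2.2
    have htel : ∀ s, g' - (F s).1.1 = ∑ s' ∈ Finset.range s,
        ∑ a ∈ S N, PowerSeries.C ((F (s' + 1)).1.2 a) * X ^ (N + s' - N) * w N a := by
      intro s
      induction s with
      | zero => simp [F]
      | succ s ih =>
        rw [Finset.sum_range_succ, ← ih, hFrec s]
        ring
    have hval : g' = ∑ a ∈ S N, PowerSeries.mk (fun s => (F (s + 1)).1.2 a) * w N a := by
      ext d
      have h1 : PowerSeries.coeff d g' = PowerSeries.coeff d (g' - (F (d + 1)).1.1) := by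
        rw [map_sub, hF2 (d + 1) d (by omega), sub_zero]
      rw [h1, htel (d + 1), map_sum, map_sum]
      have hL : ∀ s' ∈ Finset.range (d + 1), PowerSeries.coeff d
          (∑ a ∈ S N, PowerSeries.C ((F (s' + 1)).1.2 a) * X ^ (N + s' - N) * w N a) =
          ∑ a ∈ S N, (F (s' + 1)).1.2 a * PowerSeries.coeff (d - s') (w N a) := by
        intro s' hs'
        rw [map_sum]
        refine Finset.sum_congr rfl fun a _ => ?_
        rw [mul_assoc, PowerSeries.coeff_C_mul, PowerSeries.coeff_X_pow_mul',
          Nat.add_sub_cancel_left, if_pos (by simp at hs'; omega)]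
      rw [Finset.sum_congr rfl hL]
      have hR : ∀ a ∈ S N, PowerSeries.coeff d
          (PowerSeries.mk (fun s => (F (s + 1)).1.2 a) * w N a) =
          ∑ s' ∈ Finset.range (d + 1), (F (s' + 1)).1.2 a *
            PowerSeries.coeff (d - s') (w N a) := by
        intro a _
        rw [PowerSeries.coeff_mul, Finset.Nat.sum_antidiagonal_eq_sum_range_succ_mk]
        exact Finset.sum_congr rfl fun s' _ => by rw [PowerSeries.coeff_mk]
      rw [Finset.sum_congr rfl hR, Finset.sum_comm]
    rw [hval]
    exact Ideal.sum_mem _ fun a ha => Ideal.mul_mem_left _ _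
      (Ideal.subset_span (hGmem N le_rfl a ha))
  · rw [Ideal.span_le]
    rintro x hx
    simp only [hG, Set.mem_iUnion, Set.mem_image] at hx
    obtain ⟨k, hk, a, ha, rfl⟩ := hx
    exact (hwspec k a (hSsub k ha)).1

open Finsupp

/-- `MvPowerSeries (Fin 0) R` is just `R`. -/
noncomputable def mvZeroEquiv (R : Type*) [CommRing R] : MvPowerSeries (Fin 0) R ≃+* R where
  toFun := MvPowerSeries.constantCoeff (σ := Fin 0) (R := R)
  invFun := MvPowerSeries.C (σ := Fin 0) (R := R)
  left_inv φ := by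
    apply MvPowerSeries.ext
    intro d
    rw [Subsingleton.elim d 0]
    simp [MvPowerSeries.coeff_zero_C]
  right_inv r := by simp
  map_mul' := map_mul _
  map_add' := map_add _

theorem Finsupp.cons_add' {n : ℕ} (u v : ℕ) (a b : Fin n →₀ ℕ) :
    Finsupp.cons u a + Finsupp.cons v b = Finsupp.cons (u + v) (a + b) := by
  ext i
  refine Fin.cases ?_ (fun i => ?_) i <;>
    simp [Finsupp.add_apply, Finsupp.cons_zero, Finsupp.cons_succ]

/-- The `k`-th slice of a power series in `n+1` variables, as a series in `n` variables. -/
noncomputable def mvSlice {R : Type*} [CommRing R] {n : ℕ}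
    (φ : MvPowerSeries (Fin (n + 1)) R) (k : ℕ) : MvPowerSeries (Fin n) R :=
  fun t => φ (Finsupp.cons k t)

theorem coeff_mvSlice {R : Type*} [CommRing R] {n : ℕ}
    (φ : MvPowerSeries (Fin (n + 1)) R) (k : ℕ) (t : Fin n →₀ ℕ) :
    MvPowerSeries.coeff t (mvSlice φ k) = MvPowerSeries.coeff (Finsupp.cons k t) φ :=
  rfl

/-- Separating out the first variable of a multivariate power series ring. -/
noncomputable def mvSuccEquiv (R : Type*) [CommRing R] (n : ℕ) :
    MvPowerSeries (Fin (n + 1)) R ≃+* PowerSeries (MvPowerSeries (Fin n) R) where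
  toFun φ := PowerSeries.mk (mvSlice φ)
  invFun Φ := fun d =>
    MvPowerSeries.coeff (Finsupp.tail d) (PowerSeries.coeff (d 0) Φ)
  left_inv φ := by
    apply MvPowerSeries.ext
    intro d
    rw [MvPowerSeries.coeff_apply]
    show MvPowerSeries.coeff (Finsupp.tail d)
      (PowerSeries.coeff (d 0) (PowerSeries.mk (mvSlice φ))) = _
    rw [PowerSeries.coeff_mk, coeff_mvSlice, Finsupp.cons_tail, MvPowerSeries.coeff_apply]
  right_inv Φ := by
    apply PowerSeries.ext
    intro k
    rw [PowerSeries.coeff_mk]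
    apply MvPowerSeries.ext
    intro t
    show MvPowerSeries.coeff (Finsupp.tail (Finsupp.cons k t))
      (PowerSeries.coeff ((Finsupp.cons k t) 0) Φ) = _
    rw [Finsupp.cons_zero, Finsupp.tail_cons]
  map_add' φ ψ := by
    apply PowerSeries.ext
    intro k
    rw [map_add, PowerSeries.coeff_mk, PowerSeries.coeff_mk, PowerSeries.coeff_mk]
    apply MvPowerSeries.ext
    intro t
    rw [map_add, coeff_mvSlice, coeff_mvSlice, coeff_mvSlice, map_add]
  map_mul' φ ψ := by
    apply PowerSeries.ext
    intro k
    rw [PowerSeries.coeff_mk, PowerSeries.coeff_mul]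
    apply MvPowerSeries.ext
    intro t
    rw [coeff_mvSlice, MvPowerSeries.coeff_mul, map_sum]
    have hterm : ∀ q ∈ Finset.HasAntidiagonal.antidiagonal k,
        MvPowerSeries.coeff t
          (PowerSeries.coeff q.1 (PowerSeries.mk (mvSlice φ)) *
           PowerSeries.coeff q.2 (PowerSeries.mk (mvSlice ψ))) =
        ∑ r ∈ Finset.HasAntidiagonal.antidiagonal t,
          MvPowerSeries.coeff (Finsupp.cons q.1 r.1) φ *
          MvPowerSeries.coeff (Finsupp.cons q.2 r.2) ψ := by
      intro q _
      rw [PowerSeries.coeff_mk, PowerSeries.coeff_mk, MvPowerSeries.coeff_mul]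
      exact Finset.sum_congr rfl fun r _ => by rw [coeff_mvSlice, coeff_mvSlice]
    rw [Finset.sum_congr rfl hterm, ← Finset.sum_product']
    refine (Finset.sum_nbij' (fun p => ((p.1 0, p.2 0), (Finsupp.tail p.1, Finsupp.tail p.2)))
      (fun q => (Finsupp.cons q.1.1 q.2.1, Finsupp.cons q.1.2 q.2.2)) ?_ ?_ ?_ ?_ ?_)
    · intro p hp
      rw [Finset.HasAntidiagonal.mem_antidiagonal] at hp
      rw [Finset.mem_product]
      constructor
      · rw [Finset.HasAntidiagonal.mem_antidiagonal]
        have := congrArg (fun x => x 0) hp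
        simpa [Finsupp.add_apply, Finsupp.cons_zero] using this
      · rw [Finset.HasAntidiagonal.mem_antidiagonal]
        ext i
        have := congrArg (fun x => x i.succ) hp
        simpa [Finsupp.add_apply, Finsupp.cons_succ, Finsupp.tail_apply] using this
    · intro q hq
      rw [Finset.mem_product, Finset.HasAntidiagonal.mem_antidiagonal, Finset.HasAntidiagonal.mem_antidiagonal] at hq
      rw [Finset.HasAntidiagonal.mem_antidiagonal, Finsupp.cons_add', hq.1, hq.2]
    · intro p _
      simp [Finsupp.cons_tail]
    · intro q _
      simp [Finsupp.cons_zero, Finsupp.tail_cons]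
    · intro p _
      rw [Finsupp.cons_tail, Finsupp.cons_tail]

/-- `MvPowerSeries (Fin n) R` over a Noetherian ring is Noetherian. -/
theorem mvPowerSeries_isNoetherianRing (R : Type*) [CommRing R] [IsNoetherianRing R] :
    ∀ n : ℕ, IsNoetherianRing (MvPowerSeries (Fin n) R) := by
  intro n
  induction n with
  | zero => exact isNoetherianRing_of_ringEquiv R (mvZeroEquiv R).symm
  | succ n ih =>
    haveI := ih
    haveI : IsNoetherianRing (PowerSeries (MvPowerSeries (Fin n) R)) :=
      powerSeries_isNoetherianRing _
    exact isNoetherianRing_of_ringEquiv _ (mvSuccEquiv R n).symm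

open MvPowerSeries

theorem coord_le_degree {n : ℕ} (d : Fin n →₀ ℕ) (j : Fin n) :
    d j ≤ d.sum fun _ v => v := by
  by_cases h : j ∈ d.support
  · exact Finset.single_le_sum (fun _ _ => Nat.zero_le _) h
  · simp [Finsupp.notMem_support_iff.1 h]

/-- A power series all of whose coefficients in total degree `< K` vanish lies in the `K`-th
power of the maximal ideal. -/
theorem order_mem_pow {n : ℕ} (K : ℕ) (g : MvPowerSeries (Fin n) ℝ)
    (hg : ∀ d : Fin n →₀ ℕ, (d.sum fun _ v => v) < K → MvPowerSeries.coeff d g = 0) :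
    g ∈ (RingHom.ker (MvPowerSeries.constantCoeff (σ := Fin n) (R := ℝ))) ^ K := by
  classical
  induction K generalizing g with
  | zero => simpa using Submodule.mem_top
  | succ K ih =>
    set m : Ideal (MvPowerSeries (Fin n) ℝ) :=
      RingHom.ker (MvPowerSeries.constantCoeff (σ := Fin n) (R := ℝ)) with hm
    -- split off one variable from every monomial
    set G : Fin n → MvPowerSeries (Fin n) ℝ := fun i =>
      fun e => if ∀ j, j < i → e j = 0 then
        MvPowerSeries.coeff (e + Finsupp.single i 1) g else 0 with hG
    have hGcoeff : ∀ i e, MvPowerSeries.coeff e (G i) = if ∀ j, j < i → e j = 0 then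
        MvPowerSeries.coeff (e + Finsupp.single i 1) g else 0 := fun i e => rfl
    have hsplit : g = ∑ i : Fin n, MvPowerSeries.X i * G i := by
      apply MvPowerSeries.ext
      intro d
      rw [map_sum]
      have hterm : ∀ i : Fin n, MvPowerSeries.coeff d (MvPowerSeries.X i * G i) =
          if Finsupp.single i 1 ≤ d then MvPowerSeries.coeff (d - Finsupp.single i 1) (G i)
          else 0 := by
        intro i
        rw [MvPowerSeries.X_def, MvPowerSeries.coeff_monomial_mul]
        split_ifs <;> simp
      rw [Finset.sum_congr rfl fun i _ => hterm i]
      by_cases hd : d = 0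
      · subst hd
        rw [hg 0 (by simp)]
        refine (Finset.sum_eq_zero fun i _ => ?_).symm
        rw [if_neg]
        intro h
        have := h i
        simp [Finsupp.single_le_iff] at this
      · -- `d ≠ 0`: exactly the minimal element of the support contributes
        have hsupp : d.support.Nonempty := Finsupp.support_nonempty_iff.2 hd
        set i₀ := d.support.min' hsupp with hi₀
        have hi₀mem : i₀ ∈ d.support := d.support.min'_mem hsupp
        have hi₀ne : d i₀ ≠ 0 := Finsupp.mem_support_iff.1 hi₀mem
        rw [Finset.sum_eq_single i₀]
        · rw [if_pos (Finsupp.single_le_iff.2 (by omega)), hGcoeff, if_pos, tsub_add_cancel_of_le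
            (Finsupp.single_le_iff.2 (by omega))]
          intro j hj
          have hjnot : j ∉ d.support := fun hmem => absurd (d.support.min'_le j hmem) (by
            rw [← hi₀] at *; omega)
          have hdj : d j = 0 := Finsupp.notMem_support_iff.1 hjnot
          rw [Finsupp.tsub_apply, hdj, Finsupp.single_apply, if_neg (by omega)]
          rfl
        · intro i _ hii₀
          split_ifs with h1
          · rw [hGcoeff, if_neg]
            intro hall
            have hii : d i ≠ 0 := by
              have := Finsupp.single_le_iff.1 h1
              omega
            have : i₀ ≤ i := d.support.min'_le i (Finsupp.mem_support_iff.2 hii)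
            have hlt : i₀ < i := lt_of_le_of_ne this (fun h => hii₀ h.symm)
            have := hall i₀ hlt
            rw [Finsupp.tsub_apply, Finsupp.single_apply, if_neg (by exact fun h => hii₀ h)] at this
            omega
          · rfl
        · intro h
          exact absurd (Finset.mem_univ i₀) h
    rw [hsplit, pow_succ']
    refine Ideal.sum_mem _ fun i _ => Ideal.mul_mem_mul ?_ (ih _ ?_)
    · rw [hm, RingHom.mem_ker]
      simp
    · intro d hd
      rw [hGcoeff]
      split_ifs with h
      · refine hg _ ?_
        rw [Finsupp.sum_add_index (by simp) (by simp)]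
        have : ((Finsupp.single i 1).sum fun _ v => v) = 1 := by simp
        omega
      · rfl

theorem coeff_mvPderiv {n : ℕ} (i : Fin n) (f : MvPowerSeries (Fin n) ℝ) (m : Fin n →₀ ℕ) :
    MvPowerSeries.coeff m (mvPderiv i f) =
      (m i + 1 : ℝ) * MvPowerSeries.coeff (m + Finsupp.single i 1) f :=
  rfl

theorem mvPderiv_add {n : ℕ} (i : Fin n) (f g : MvPowerSeries (Fin n) ℝ) :
    mvPderiv i (f + g) = mvPderiv i f + mvPderiv i g := by
  apply MvPowerSeries.ext
  intro m
  rw [map_add, coeff_mvPderiv, coeff_mvPderiv, coeff_mvPderiv, map_add, mul_add]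

theorem mvPderiv_coe {n : ℕ} (i : Fin n) (p : MvPolynomial (Fin n) ℝ) :
    mvPderiv i (↑p : MvPowerSeries (Fin n) ℝ) = ↑(MvPolynomial.pderiv i p) := by
  classical
  induction p using MvPolynomial.induction_on' with
  | monomial d a =>
    apply MvPowerSeries.ext
    intro m
    rw [coeff_mvPderiv, MvPolynomial.pderiv_monomial, MvPolynomial.coe_monomial,
      MvPolynomial.coe_monomial, MvPowerSeries.coeff_monomial, MvPowerSeries.coeff_monomial]
    by_cases h : m + Finsupp.single i 1 = d
    · have hdi : d i = m i + 1 := by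
        rw [← h, Finsupp.add_apply, Finsupp.single_apply, if_pos rfl]
      rw [if_pos h, if_pos, hdi]
      · push_cast
        ring
      · rw [← h, add_tsub_cancel_right]
    · rw [if_neg h, mul_zero]
      by_cases h2 : m = d - Finsupp.single i 1
      · rw [if_pos h2]
        have hdi : d i = 0 := by
          by_contra hne
          apply h
          rw [h2, tsub_add_cancel_of_le (Finsupp.single_le_iff.2 (by omega))]
        rw [hdi]
        push_cast
        ring
      · rw [if_neg h2]
  | add p q ihp ihq =>
    rw [MvPolynomial.coe_add, mvPderiv_add, ihp, ihq, map_add, MvPolynomial.coe_add]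

theorem derivation_pow_mem {A : Type*} [CommRing A] [Algebra ℝ A]
    (D : Derivation ℝ A A) (I : Ideal A) :
    ∀ (k : ℕ) (x : A), x ∈ I ^ (k + 1) → D x ∈ I ^ k := by
  intro k
  induction k with
  | zero => intro x _; simpa using Submodule.mem_top
  | succ k ih =>
    intro x hx
    rw [pow_succ] at hx
    refine Submodule.mul_induction_on hx (fun a ha b hb => ?_) (fun y z hy hz => ?_)
    · rw [D.leibniz, smul_eq_mul, smul_eq_mul]
      refine Ideal.add_mem _ (Ideal.mul_mem_right _ _ ha) ?_
      have : D a ∈ I ^ k := ih a ha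
      have hmul : b * D a ∈ I * I ^ k := Ideal.mul_mem_mul hb this
      rwa [← pow_succ'] at hmul
    · rw [map_add]
      exact Ideal.add_mem _ hy hz

theorem quot_chain_rule {n : ℕ} (𝔞 : Ideal (MvPowerSeries (Fin n) ℝ))
    (D : Derivation ℝ (MvPowerSeries (Fin n) ℝ ⧸ 𝔞) (MvPowerSeries (Fin n) ℝ ⧸ 𝔞))
    (p : MvPolynomial (Fin n) ℝ) :
    D (Ideal.Quotient.mk 𝔞 ↑p) = ∑ i : Fin n,
      Ideal.Quotient.mk 𝔞 ↑(MvPolynomial.pderiv i p) *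
        D (Ideal.Quotient.mk 𝔞 ((MvPolynomial.X i : MvPolynomial (Fin n) ℝ) : MvPowerSeries (Fin n) ℝ)) := by
  classical
  set π := Ideal.Quotient.mk 𝔞 with hπ
  induction p using MvPolynomial.induction_on with
  | C a =>
    have h1 : (↑(MvPolynomial.C a : MvPolynomial (Fin n) ℝ) : MvPowerSeries (Fin n) ℝ) =
        algebraMap ℝ (MvPowerSeries (Fin n) ℝ) a := by
      rw [MvPolynomial.coe_C, MvPowerSeries.c_eq_algebraMap]
    rw [h1]
    have h2 : π (algebraMap ℝ (MvPowerSeries (Fin n) ℝ) a) =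
        algebraMap ℝ (MvPowerSeries (Fin n) ℝ ⧸ 𝔞) a := by
      rw [hπ, Ideal.Quotient.mk_algebraMap]
    rw [h2, D.map_algebraMap]
    refine (Finset.sum_eq_zero fun i _ => ?_).symm
    rw [MvPolynomial.pderiv_C]
    simp
  | add p q ihp ihq =>
    rw [MvPolynomial.coe_add, map_add, map_add, ihp, ihq, ← Finset.sum_add_distrib]
    refine Finset.sum_congr rfl fun i _ => ?_
    rw [map_add, MvPolynomial.coe_add, map_add, add_mul]
  | mul_X p i ih =>
    rw [MvPolynomial.coe_mul, map_mul, D.leibniz, smul_eq_mul, smul_eq_mul, ih]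
    have hterm : ∀ j : Fin n, π ↑(MvPolynomial.pderiv j (p * MvPolynomial.X i)) *
        D (π ((MvPolynomial.X j : MvPolynomial (Fin n) ℝ) : MvPowerSeries (Fin n) ℝ)) =
        π ((MvPolynomial.X i : MvPolynomial (Fin n) ℝ) : MvPowerSeries (Fin n) ℝ) * (π ↑(MvPolynomial.pderiv j p) * D (π ((MvPolynomial.X j : MvPolynomial (Fin n) ℝ) : MvPowerSeries (Fin n) ℝ))) +
        (if j = i then π ↑p * D (π ((MvPolynomial.X i : MvPolynomial (Fin n) ℝ) : MvPowerSeries (Fin n) ℝ)) else 0) := by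
      intro j
      rw [MvPolynomial.pderiv_mul]
      by_cases h : j = i
      · subst h
        rw [MvPolynomial.pderiv_X_self, mul_one, MvPolynomial.coe_add, MvPolynomial.coe_mul,
          map_add, map_mul, if_pos rfl, add_mul]
        ring
      · rw [MvPolynomial.pderiv_X_of_ne (fun hh => h hh.symm), mul_zero, add_zero,
          MvPolynomial.coe_mul, map_mul, if_neg h, add_zero]
        ring
    rw [Finset.sum_congr rfl fun j _ => hterm j, Finset.sum_add_distrib, ← Finset.mul_sum,
      Finset.sum_ite_eq' Finset.univ i (fun _ => π ↑p * D (π ((MvPolynomial.X i : MvPolynomial (Fin n) ℝ) : MvPowerSeries (Fin n) ℝ))),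
      if_pos (Finset.mem_univ i)]
    ring

end Auxiliary

/-- If `𝔞` contains the Jacobian ideal of `f`, `A = ℝ[[x₁,…,xₙ]]/𝔞` and `a = [f] ∈ A`, then
every `ℝ`-linear derivation `D : A → A` which is continuous with respect to the adic topology
defined by the powers of the maximal ideal of `A` satisfies `D a = 0`. -/
theorem stmt_2 {n : ℕ} (f : MvPowerSeries (Fin n) ℝ)
    (𝔞 : Ideal (MvPowerSeries (Fin n) ℝ)) (hΔ : jacobianIdeal f ≤ 𝔞)
    (D : Derivation ℝ (MvPowerSeries (Fin n) ℝ ⧸ 𝔞) (MvPowerSeries (Fin n) ℝ ⧸ 𝔞))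
    (hD : @Continuous (MvPowerSeries (Fin n) ℝ ⧸ 𝔞) (MvPowerSeries (Fin n) ℝ ⧸ 𝔞)
      (maxIdealQuot 𝔞).adicTopology (maxIdealQuot 𝔞).adicTopology ⇑D) :
    D (Ideal.Quotient.mk 𝔞 f) = 0 := by
  classical
  by_cases hn : n = 0
  · -- with no variables, `f` is a constant
    subst hn
    have hf : f = (MvPowerSeries.C (σ := Fin 0) (R := ℝ)) (MvPowerSeries.constantCoeff (σ := Fin 0) (R := ℝ) f) := by
      apply MvPowerSeries.ext
      intro d
      rw [Subsingleton.elim d 0]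
      simp
    rw [hf, MvPowerSeries.c_eq_algebraMap, Ideal.Quotient.mk_algebraMap, D.map_algebraMap]
  by_cases ha : 𝔞 = ⊤
  · subst ha
    haveI : Subsingleton (MvPowerSeries (Fin n) ℝ ⧸ (⊤ : Ideal (MvPowerSeries (Fin n) ℝ))) :=
      Ideal.Quotient.subsingleton_iff.2 rfl
    exact Subsingleton.elim _ _
  -- the main case
  set π := Ideal.Quotient.mk 𝔞 with hπ
  set m : Ideal (MvPowerSeries (Fin n) ℝ) :=
    RingHom.ker (MvPowerSeries.constantCoeff (σ := Fin n) (R := ℝ)) with hm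
  haveI hNoethR : IsNoetherianRing (MvPowerSeries (Fin n) ℝ) := mvPowerSeries_isNoetherianRing ℝ n
  haveI : Nontrivial (MvPowerSeries (Fin n) ℝ ⧸ 𝔞) := Ideal.Quotient.nontrivial_iff.mpr ha
  haveI : IsLocalRing (MvPowerSeries (Fin n) ℝ ⧸ 𝔞) := IsLocalRing.of_surjective' π Ideal.Quotient.mk_surjective
  have hmem_m : ∀ x : MvPowerSeries (Fin n) ℝ, x ∈ m ↔ ¬IsUnit x := by
    intro x
    rw [hm, RingHom.mem_ker, MvPowerSeries.isUnit_iff_constantCoeff, isUnit_iff_ne_zero, not_not]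
  have h𝔞m : 𝔞 ≤ m := by
    intro a ha'
    rw [hmem_m]
    intro hu
    exact ha (Ideal.eq_top_of_isUnit_mem _ ha' hu)
  have hM : maxIdealQuot 𝔞 = IsLocalRing.maximalIdeal (MvPowerSeries (Fin n) ℝ ⧸ 𝔞) := by
    apply le_antisymm
    · rw [maxIdealQuot, Ideal.map_le_iff_le_comap]
      intro x hx
      rw [Ideal.mem_comap, IsLocalRing.mem_maximalIdeal, mem_nonunits_iff]
      intro hu
      obtain ⟨u, hu'⟩ := hu
      obtain ⟨y, hy⟩ := Ideal.Quotient.mk_surjective (I := 𝔞) ↑u⁻¹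
      have h1 : π (x * y) = 1 := by
        rw [map_mul, hy, ← hu']
        exact u.mul_inv
      have h2 : x * y - 1 ∈ 𝔞 := by
        rw [← Ideal.Quotient.eq_zero_iff_mem, map_sub, h1, map_one, sub_self]
      have h3 : (1 : MvPowerSeries (Fin n) ℝ) ∈ m := by
        have hxy : x * y ∈ m := Ideal.mul_mem_right _ _ hx
        have := m.sub_mem hxy (h𝔞m h2)
        simpa using this
      rw [hm, RingHom.mem_ker, map_one] at h3
      exact one_ne_zero h3
    · intro z hz
      obtain ⟨x, hx⟩ := Ideal.Quotient.mk_surjective (I := 𝔞) z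
      rw [IsLocalRing.mem_maximalIdeal, mem_nonunits_iff] at hz
      have hxm : x ∈ m := by
        rw [hmem_m]
        intro hu
        exact hz (hx ▸ hu.map π)
      exact hx ▸ Ideal.mem_map_of_mem π hxm
  -- membership in all powers of the maximal ideal
  have hmem : ∀ K : ℕ, D (π f) ∈ maxIdealQuot 𝔞 ^ K := by
    intro K
    set N : ℕ := K + 2 with hN
    set bnd : Fin n →₀ ℕ := Finsupp.equivFunOnFinite.symm (fun _ => N) with hbnd
    have hbnd' : ∀ j, bnd j = N := fun j => rfl
    set p := MvPowerSeries.trunc ℝ bnd f with hp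
    set tl := f - ↑p with htl
    have htl_coeff : ∀ d : Fin n →₀ ℕ, (∀ j, d j < N) → MvPowerSeries.coeff d tl = 0 := by
      intro d hd
      rw [htl, map_sub, MvPolynomial.coeff_coe, hp, MvPowerSeries.coeff_trunc, if_pos,
        sub_self]
      refine lt_of_le_of_ne (Finsupp.le_def.2 fun j => by rw [hbnd']; exact (hd j).le) ?_
      intro he
      have h0 : d ⟨0, Nat.pos_of_ne_zero hn⟩ = N := by rw [he, hbnd']
      exact absurd h0 (hd _).ne
    have htl_mem : tl ∈ m ^ (K + 1) := by
      refine order_mem_pow (K + 1) tl fun d hd => htl_coeff d fun j => ?_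
      have := coord_le_degree d j
      omega
    have hDtl : D (π tl) ∈ maxIdealQuot 𝔞 ^ K := by
      refine derivation_pow_mem D _ K _ ?_
      have h1 : π tl ∈ Ideal.map π (m ^ (K + 1)) := Ideal.mem_map_of_mem π htl_mem
      rwa [Ideal.map_pow] at h1
    have hpder : ∀ i : Fin n, π ↑(MvPolynomial.pderiv i p) ∈ maxIdealQuot 𝔞 ^ K := by
      intro i
      have hsplit : mvPderiv i f = mvPderiv i ↑p + mvPderiv i tl := by
        rw [← mvPderiv_add]
        congr 1
        rw [htl]
        ring
      have h1 : π (mvPderiv i f) = 0 := by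
        rw [Ideal.Quotient.eq_zero_iff_mem]
        exact hΔ (Ideal.subset_span ⟨i, rfl⟩)
      have h2 : mvPderiv i tl ∈ m ^ K := by
        refine order_mem_pow K _ fun d hd => ?_
        rw [coeff_mvPderiv]
        have hz : MvPowerSeries.coeff (d + Finsupp.single i 1) tl = 0 := by
          refine htl_coeff _ fun j => ?_
          rw [Finsupp.add_apply]
          have h3 := coord_le_degree d j
          have h5 : Finsupp.single i 1 j ≤ 1 := by
            rw [Finsupp.single_apply]
            split_ifs <;> omega
          omega
        rw [hz, mul_zero]
      have h6 : π (mvPderiv i tl) ∈ maxIdealQuot 𝔞 ^ K := by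
        have h7 := Ideal.mem_map_of_mem π h2
        rwa [Ideal.map_pow] at h7
      have h8 : π ↑(MvPolynomial.pderiv i p) = π (mvPderiv i f) - π (mvPderiv i tl) := by
        rw [← mvPderiv_coe, hsplit, map_add]
        ring
      rw [h8, h1, zero_sub]
      exact neg_mem h6
    have hDp : D (π ↑p) ∈ maxIdealQuot 𝔞 ^ K := by
      rw [quot_chain_rule 𝔞 D p]
      exact Ideal.sum_mem _ fun i _ => Ideal.mul_mem_right _ _ (hpder i)
    have hfp : f = ↑p + tl := by rw [htl]; ring
    have hDf : D (π f) = D (π ↑p) + D (π tl) := by rw [hfp, map_add, map_add]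
    rw [hDf]
    exact Ideal.add_mem _ hDp hDtl
  have hbot : (⨅ k : ℕ, maxIdealQuot 𝔞 ^ k) = ⊥ := by
    rw [hM]
    exact Ideal.iInf_pow_eq_bot_of_isLocalRing _
      (IsLocalRing.maximalIdeal.isMaximal _).ne_top
  have hfin : D (π f) ∈ (⊥ : Ideal (MvPowerSeries (Fin n) ℝ ⧸ 𝔞)) := by
    rw [← hbot]
    exact (Submodule.mem_iInf _).2 hmem
  simpa using hfin
end

section
/- For n ≥ 1, let fₙ = x₁^{3n−1} + ⋯ + xₙ^{3n−1} + (x₁·x₂·⋯·xₙ)³ ∈ ℝ[[x₁,…,xₙ]], let Δ(fₙ) be its Jacobian ideal, and let aₙ = [fₙ] be the class of fₙ in Aₙ = ℝ[[x₁,…,xₙ]]/Δ(fₙ). Then aₙ^{n−1} ≠ 0 and aₙⁿ = 0 in Aₙ; equivalently, fₙ^{n−1} ∉ Δ(fₙ) and fₙⁿ ∈ Δ(fₙ). -/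
/-- `fₙ = x₁^{3n−1} + ⋯ + xₙ^{3n−1} + (x₁⋯xₙ)³`. -/
noncomputable def fExample (n : ℕ) : MvPowerSeries (Fin n) ℝ :=
  (∑ i : Fin n, MvPowerSeries.X i ^ (3 * n - 1)) + (∏ i : Fin n, MvPowerSeries.X i) ^ 3

namespace Stmt6

open MvPowerSeries Finsupp Finset

variable {n : ℕ}

/-- monomial shorthand -/
noncomputable abbrev Mo (μ : Fin n →₀ ℕ) (c : ℝ) : MvPowerSeries (Fin n) ℝ :=
  MvPowerSeries.monomial (R := ℝ) μ c

/-- total degree of an exponent vector -/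
def dg (m : Fin n →₀ ℕ) : ℕ := ∑ j, m j

lemma dg_add (a b : Fin n →₀ ℕ) : dg (a + b) = dg a + dg b := by
  simp [dg, Finsupp.add_apply, Finset.sum_add_distrib]

lemma dg_tsub {a b : Fin n →₀ ℕ} (h : b ≤ a) : dg (a - b) + dg b = dg a := by
  rw [← dg_add, tsub_add_cancel_of_le h]

lemma dg_mono {a b : Fin n →₀ ℕ} (h : b ≤ a) : dg b ≤ dg a := by
  rw [← dg_tsub h]; omega

lemma dg_single (i : Fin n) (k : ℕ) : dg (Finsupp.single i k) = k := by
  simp [dg, Finsupp.single_apply]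

lemma mvPderiv_coeff (i : Fin n) (f : MvPowerSeries (Fin n) ℝ) (m : Fin n →₀ ℕ) :
    MvPowerSeries.coeff m (mvPderiv i f) =
      ((m i : ℝ) + 1) * MvPowerSeries.coeff (m + Finsupp.single i 1) f := rfl

lemma mvPderiv_add (i : Fin n) (f g : MvPowerSeries (Fin n) ℝ) :
    mvPderiv i (f + g) = mvPderiv i f + mvPderiv i g := by
  funext m
  show ((m i : ℝ) + 1) * MvPowerSeries.coeff (m + Finsupp.single i 1) (f + g) =
    ((m i : ℝ) + 1) * MvPowerSeries.coeff (m + Finsupp.single i 1) f +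
      ((m i : ℝ) + 1) * MvPowerSeries.coeff (m + Finsupp.single i 1) g
  rw [map_add]; ring

lemma mvPderiv_monomial (i : Fin n) (μ : Fin n →₀ ℕ) (c : ℝ) :
    mvPderiv i (Mo μ c) = Mo (μ - Finsupp.single i 1) ((μ i : ℝ) * c) := by
  ext m
  rw [mvPderiv_coeff, MvPowerSeries.coeff_monomial, MvPowerSeries.coeff_monomial]
  by_cases h : m + Finsupp.single i 1 = μ
  · have hmi : μ i = m i + 1 := by
      rw [← h]; simp
    have hm : m = μ - Finsupp.single i 1 := by
      rw [← h, add_tsub_cancel_right]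
    rw [if_pos h, if_pos hm, hmi]
    push_cast; ring
  · rw [if_neg h]
    by_cases hm : m = μ - Finsupp.single i 1
    · rcases Nat.eq_zero_or_pos (μ i) with h0 | h0
      · rw [if_pos hm, h0]; simp
      · exfalso; apply h
        rw [hm, tsub_add_cancel_of_le]
        exact Finsupp.single_le_iff.mpr h0
    · rw [if_neg hm]; ring

/-- exponent `(3n-2)·δᵢ` -/
noncomputable def E (i : Fin n) : Fin n →₀ ℕ := Finsupp.single i (3 * n - 2)

/-- exponent `2·δᵢ + 3·(1-δᵢ)` -/
noncomputable def W (i : Fin n) : Fin n →₀ ℕ :=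
  Finsupp.equivFunOnFinite.symm fun j => if j = i then 2 else 3

/-- exponent `(3,3,…,3)` -/
noncomputable def threes (n : ℕ) : Fin n →₀ ℕ := Finsupp.equivFunOnFinite.symm fun _ => 3

@[simp] lemma W_apply (i j : Fin n) : W i j = if j = i then 2 else 3 := rfl

@[simp] lemma threes_apply (j : Fin n) : threes n j = 3 := rfl

/-- the jacobian generators, in explicit monomial form -/
noncomputable def g (n : ℕ) (i : Fin n) : MvPowerSeries (Fin n) ℝ :=
  Mo (E i) ((3 * n - 1 : ℕ) : ℝ) + Mo (W i) 3

lemma mon_prod {ι : Type*} (s : Finset ι) (μ : ι → (Fin n →₀ ℕ)) :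
    (∏ j ∈ s, Mo (μ j) 1) = Mo (∑ j ∈ s, μ j) 1 := by
  classical
  induction s using Finset.induction_on with
  | empty => simp [MvPowerSeries.monomial_zero_one]
  | insert _ _ h ih =>
      rw [Finset.prod_insert h, Finset.sum_insert h, ih,
        MvPowerSeries.monomial_mul_monomial, one_mul]

lemma mon_pow (μ : Fin n →₀ ℕ) (k : ℕ) : (Mo μ 1) ^ k = Mo (k • μ) 1 := by
  induction k with
  | zero => simp [MvPowerSeries.monomial_zero_one]
  | succ k ih =>
      rw [pow_succ, ih, MvPowerSeries.monomial_mul_monomial, one_mul, succ_nsmul]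

lemma fExample_eq (n : ℕ) :
    fExample n = (∑ j : Fin n, Mo (Finsupp.single j (3 * n - 1)) 1) + Mo (threes n) 1 := by
  unfold fExample
  congr 1
  · exact Finset.sum_congr rfl fun j _ => MvPowerSeries.X_pow_eq j (3 * n - 1)
  · have h1 : (∏ i : Fin n, (MvPowerSeries.X i : MvPowerSeries (Fin n) ℝ)) =
        Mo (∑ j : Fin n, Finsupp.single j 1) 1 := by
      rw [← mon_prod]
      exact Finset.prod_congr rfl fun j _ => rfl
    rw [h1, mon_pow]
    have h2 : (3 • ∑ j : Fin n, Finsupp.single j 1 : Fin n →₀ ℕ) = threes n := by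
      ext k
      rw [Finsupp.smul_apply, Finsupp.finset_sum_apply]
      simp [Finsupp.single_apply]
    rw [h2]

lemma mvPderiv_zero (i : Fin n) : mvPderiv i (0 : MvPowerSeries (Fin n) ℝ) = 0 := by
  funext m
  show ((m i : ℝ) + 1) * MvPowerSeries.coeff (m + Finsupp.single i 1) 0 = 0
  simp

lemma mvPderiv_sum {ι : Type*} (s : Finset ι) (F : ι → MvPowerSeries (Fin n) ℝ) (i : Fin n) :
    mvPderiv i (∑ j ∈ s, F j) = ∑ j ∈ s, mvPderiv i (F j) := by
  classical
  induction s using Finset.induction_on with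
  | empty => simpa using mvPderiv_zero i
  | insert _ _ h ih => rw [Finset.sum_insert h, Finset.sum_insert h, mvPderiv_add, ih]

lemma pderiv_fExample (hn : 1 ≤ n) (i : Fin n) : mvPderiv i (fExample n) = g n i := by
  rw [fExample_eq, mvPderiv_add, mvPderiv_sum]
  have hsum : (∑ j : Fin n, mvPderiv i (Mo (Finsupp.single j (3 * n - 1)) 1)) =
      Mo (E i) ((3 * n - 1 : ℕ) : ℝ) := by
    rw [Fintype.sum_eq_single i]
    · rw [mvPderiv_monomial, Finsupp.single_eq_same, mul_one]
      have : (Finsupp.single i (3 * n - 1) - Finsupp.single i 1 : Fin n →₀ ℕ) =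
          E i := by
        rw [← Finsupp.single_tsub]
        unfold E
        congr 1
      rw [this]
    · intro j hj
      rw [mvPderiv_monomial, Finsupp.single_eq_of_ne' hj]
      simp
  rw [hsum, mvPderiv_monomial]
  have he : threes n - Finsupp.single i 1 = W i := by
    ext k
    rw [Finsupp.tsub_apply]
    by_cases hk : k = i
    · simp [hk]
    · simp [Finsupp.single_apply, hk, (show ¬ i = k from fun h => hk h.symm)]
  have hc : ((threes n i : ℕ) : ℝ) * 1 = 3 := by simp
  rw [he, hc]
  rfl

/-! ### Membership part -/

noncomputable def ones (n : ℕ) : Fin n →₀ ℕ := Finsupp.equivFunOnFinite.symm fun _ => 1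

noncomputable def vv (n k : ℕ) : Fin n →₀ ℕ :=
  Finsupp.equivFunOnFinite.symm fun j => if (j : ℕ) < k then 3 * k + 1 else 3 * n + 3 * k

noncomputable def uu (n k : ℕ) : Fin n →₀ ℕ :=
  Finsupp.equivFunOnFinite.symm fun j =>
    if (j : ℕ) < k then 3 * k + 1 else if (j : ℕ) = k then 3 * k + 2 else 3 * n + 3 * k

@[simp] lemma ones_apply (j : Fin n) : ones n j = 1 := rfl
@[simp] lemma vv_apply (k : ℕ) (j : Fin n) :
    vv n k j = if (j : ℕ) < k then 3 * k + 1 else 3 * n + 3 * k := rfl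
@[simp] lemma uu_apply (k : ℕ) (j : Fin n) :
    uu n k j = if (j : ℕ) < k then 3 * k + 1
      else if (j : ℕ) = k then 3 * k + 2 else 3 * n + 3 * k := rfl

lemma E_apply (i j : Fin n) : E i j = if (j : ℕ) = (i : ℕ) then 3 * n - 2 else 0 := by
  unfold E
  rw [Finsupp.single_apply]
  by_cases h : i = j
  · rw [if_pos h, if_pos (by rw [h])]
  · rw [if_neg h, if_neg (by rw [Fin.ext_iff] at h; omega)]

lemma W_apply' (i j : Fin n) : W i j = if (j : ℕ) = (i : ℕ) then 2 else 3 := by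
  rw [W_apply]
  by_cases h : j = i
  · rw [if_pos h, if_pos (by rw [h])]
  · rw [if_neg h, if_neg (by rw [Fin.ext_iff] at h; omega)]

lemma uE (hn : 1 ≤ n) {k : ℕ} (hk : k < n) : uu n k + E ⟨k, hk⟩ = vv n k := by
  ext j
  rw [Finsupp.add_apply, uu_apply, vv_apply, E_apply]
  simp only [Fin.val_mk]
  split_ifs <;> omega

lemma uW (hn : 1 ≤ n) {k : ℕ} (hk : k < n) : uu n k + W ⟨k, hk⟩ = vv n (k + 1) := by
  ext j
  rw [Finsupp.add_apply, uu_apply, vv_apply, W_apply']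
  simp only [Fin.val_mk]
  split_ifs <;> omega

lemma vv_top (hn : 1 ≤ n) : vv n n = vv n 0 + ones n := by
  ext j
  rw [Finsupp.add_apply, vv_apply, vv_apply, ones_apply]
  have := j.isLt
  split_ifs <;> omega

/-- the scalar `γ = -3/(3n-1)` -/
noncomputable def gam (n : ℕ) : ℝ := -3 / ((3 * n - 1 : ℕ) : ℝ)

lemma N_ne (hn : 1 ≤ n) : ((3 * n - 1 : ℕ) : ℝ) ≠ 0 := by
  have : (1 : ℕ) ≤ 3 * n - 1 := by omega
  positivity

lemma mem_Pn (hn : 1 ≤ n) : Mo (vv n 0) 1 ∈ Ideal.span (Set.range (g n)) := by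
  classical
  set I := Ideal.span (Set.range (g n)) with hI
  set N : ℝ := ((3 * n - 1 : ℕ) : ℝ) with hNdef
  have hN : N ≠ 0 := N_ne hn
  set T : ℕ → MvPowerSeries (Fin n) ℝ := fun k => Mo (vv n k) (gam n ^ k) with hT
  have hterm : ∀ i : Fin n,
      Mo (uu n i.val) (gam n ^ i.val * N⁻¹) * g n i = T i.val - T (i.val + 1) := by
    intro i
    have h1 : (⟨i.val, i.isLt⟩ : Fin n) = i := rfl
    unfold g
    rw [mul_add, MvPowerSeries.monomial_mul_monomial, MvPowerSeries.monomial_mul_monomial]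
    rw [← h1, uE hn i.isLt, uW hn i.isLt]
    have hg : gam n = -3 / N := by rw [hNdef]; rfl
    have hc1 : gam n ^ i.val * N⁻¹ * ((3 * n - 1 : ℕ) : ℝ) = gam n ^ i.val := by
      rw [← hNdef, mul_assoc, inv_mul_cancel₀ hN, mul_one]
    have hc2 : gam n ^ i.val * N⁻¹ * 3 = -(gam n ^ (i.val + 1)) := by
      rw [pow_succ, hg, div_eq_mul_inv]
      ring
    rw [hc1, hc2, map_neg, hT, sub_eq_add_neg]
  have hS : (∑ i : Fin n, Mo (uu n i.val) (gam n ^ i.val * N⁻¹) * g n i) ∈ I := by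
    refine Ideal.sum_mem I fun i _ => Ideal.mul_mem_left I _ ?_
    exact Ideal.subset_span (Set.mem_range_self i)
  have htel : (∑ i : Fin n, Mo (uu n i.val) (gam n ^ i.val * N⁻¹) * g n i) = T 0 - T n := by
    rw [Finset.sum_congr rfl fun i _ => hterm i]
    rw [Fin.sum_univ_eq_sum_range (fun k => T k - T (k + 1)) n]
    exact Finset.sum_range_sub' T n
  have hZfac : Mo (vv n 0) 1 * (1 - Mo (ones n) (gam n ^ n)) = T 0 - T n := by
    rw [mul_sub, mul_one, MvPowerSeries.monomial_mul_monomial, one_mul, ← vv_top hn]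
    rw [hT]
    norm_num
  set Z : MvPowerSeries (Fin n) ℝ := 1 - Mo (ones n) (gam n ^ n) with hZ
  have honesne : ones n ≠ (0 : Fin n →₀ ℕ) := by
    intro h
    have := DFunLike.congr_fun h ⟨0, hn⟩
    simp at this
  have hconst : MvPowerSeries.constantCoeff Z = ((1 : ℝˣ) : ℝ) := by
    rw [hZ, map_sub]
    rw [← MvPowerSeries.coeff_zero_eq_constantCoeff_apply, ← MvPowerSeries.coeff_zero_eq_constantCoeff_apply]
    rw [MvPowerSeries.coeff_monomial, if_neg (by exact fun h => honesne h.symm)]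
    simp
  have hunit : Z * MvPowerSeries.invOfUnit Z 1 = 1 := MvPowerSeries.mul_invOfUnit Z 1 hconst
  have hfin : Mo (vv n 0) 1 = (∑ i : Fin n, Mo (uu n i.val) (gam n ^ i.val * N⁻¹) * g n i) *
      MvPowerSeries.invOfUnit Z 1 := by
    rw [htel, ← hZfac, mul_assoc, hunit, mul_one]
  rw [hfin]
  exact Ideal.mul_mem_right _ I hS

/-! ### Non-membership part -/

noncomputable def qex (n : ℕ) : Fin n →₀ ℕ := Finsupp.equivFunOnFinite.symm fun _ => 3 * n - 3

@[simp] lemma qex_apply (j : Fin n) : qex n j = 3 * n - 3 := rfl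

lemma dg_qex : dg (qex n) = n * (3 * n - 3) := by
  simp [dg, mul_comm]

lemma dg_E (i : Fin n) : dg (E i) = 3 * n - 2 := dg_single i _

lemma dg_W (hn : 1 ≤ n) (i : Fin n) : dg (W i) = 3 * n - 1 := by
  classical
  rw [dg, ← Finset.add_sum_erase _ _ (Finset.mem_univ i)]
  have h1 : W i i = 2 := by simp
  have h2 : ∀ j ∈ Finset.univ.erase i, W i j = 3 := by
    intro j hj
    have := Finset.ne_of_mem_erase hj
    simp [W_apply, this]
  rw [h1, Finset.sum_congr rfl h2, Finset.sum_const, Finset.card_erase_of_mem (Finset.mem_univ i)]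
  simp only [Finset.card_univ, Fintype.card_fin, smul_eq_mul]
  omega

lemma E_le_iff (i : Fin n) (b : Fin n →₀ ℕ) : E i ≤ b ↔ 3 * n - 2 ≤ b i :=
  Finsupp.single_le_iff

lemma coeff_mul_g (h : MvPowerSeries (Fin n) ℝ) (i : Fin n) (b : Fin n →₀ ℕ) :
    MvPowerSeries.coeff b (h * g n i) =
      (if E i ≤ b then MvPowerSeries.coeff (b - E i) h * ((3 * n - 1 : ℕ) : ℝ) else 0) +
      (if W i ≤ b then MvPowerSeries.coeff (b - W i) h * 3 else 0) := by
  unfold g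
  rw [mul_add, map_add, MvPowerSeries.coeff_mul_monomial, MvPowerSeries.coeff_mul_monomial]

set_option maxHeartbeats 1000000 in
/-- One degree-raising correction step. -/
lemma step (hn : 1 ≤ n) (d : ℕ) (hd : d + (3 * n - 2) < n * (3 * n - 3))
    (hh : Fin n → MvPowerSeries (Fin n) ℝ)
    (hrep : ∑ i, hh i * g n i = Mo (qex n) 1)
    (hvan : ∀ i a, dg a < d → MvPowerSeries.coeff a (hh i) = 0) :
    ∃ hh' : Fin n → MvPowerSeries (Fin n) ℝ,
      (∑ i, hh' i * g n i = Mo (qex n) 1) ∧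
      ∀ i a, dg a < d + 1 → MvPowerSeries.coeff a (hh' i) = 0 := by
  classical
  set N : ℝ := ((3 * n - 1 : ℕ) : ℝ) with hNdef
  have hN : N ≠ 0 := N_ne hn
  -- the degree-(d+e) linear relations
  have hstar : ∀ b : Fin n →₀ ℕ, dg b = d + (3 * n - 2) →
      ∑ i, (if E i ≤ b then MvPowerSeries.coeff (b - E i) (hh i) else 0) = 0 := by
    intro b hb
    have hbne : b ≠ qex n := by
      intro hbq
      rw [hbq, dg_qex] at hb
      omega
    have h0 : MvPowerSeries.coeff b (∑ i, hh i * g n i) = 0 := by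
      rw [hrep, MvPowerSeries.coeff_monomial, if_neg hbne]
    rw [map_sum, Finset.sum_congr rfl (fun i _ => coeff_mul_g (hh i) i b),
      Finset.sum_add_distrib] at h0
    have hB : ∀ i : Fin n,
        (if W i ≤ b then MvPowerSeries.coeff (b - W i) (hh i) * 3 else 0) = 0 := by
      intro i
      split_ifs with hw
      · have h1 := dg_tsub hw
        rw [dg_W hn] at h1
        have : dg (b - W i) < d := by omega
        rw [hvan i _ this, zero_mul]
      · rfl
    rw [Finset.sum_congr rfl (fun i _ => hB i), Finset.sum_const_zero, add_zero] at h0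
    have h2 : ∀ i : Fin n,
        (if E i ≤ b then MvPowerSeries.coeff (b - E i) (hh i) * N else 0) =
        (if E i ≤ b then MvPowerSeries.coeff (b - E i) (hh i) else 0) * N := by
      intro i; split_ifs <;> simp
    rw [Finset.sum_congr rfl (fun i _ => h2 i), ← Finset.sum_mul] at h0
    exact (mul_eq_zero.mp h0).resolve_right hN
  -- the "count of large coordinates" set
  set S3 : (Fin n →₀ ℕ) → Finset (Fin n) :=
    fun b => Finset.univ.filter (fun k => 3 * n - 2 ≤ b k) with hS3
  -- the antisymmetric Koszul corrector
  set A : Fin n → Fin n → MvPowerSeries (Fin n) ℝ := fun i j x =>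
    if i ≠ j ∧ dg x + (3 * n - 2) = d then
      (MvPowerSeries.coeff (x + E j) (hh i) - MvPowerSeries.coeff (x + E i) (hh j)) /
        (N * ((S3 (x + E i + E j)).card : ℝ))
    else 0 with hA
  have hAco : ∀ (i j : Fin n) (x : Fin n →₀ ℕ), MvPowerSeries.coeff x (A i j) =
      if i ≠ j ∧ dg x + (3 * n - 2) = d then
        (MvPowerSeries.coeff (x + E j) (hh i) - MvPowerSeries.coeff (x + E i) (hh j)) /
          (N * ((S3 (x + E i + E j)).card : ℝ))
      else 0 := fun i j x => rfl
  have hAanti : ∀ i j : Fin n, A j i = - A i j := by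
    intro i j
    funext x
    show (A j i) x = -((A i j) x)
    rw [hA]
    simp only
    by_cases hc : i ≠ j ∧ dg x + (3 * n - 2) = d
    · rw [if_pos ⟨hc.1.symm, hc.2⟩, if_pos hc]
      rw [add_right_comm x (E j) (E i)]
      rw [← neg_div, neg_sub]
    · rw [if_neg (fun hc' => hc ⟨hc'.1.symm, hc'.2⟩), if_neg hc, neg_zero]
  have hAdiag : ∀ i : Fin n, A i i = 0 := by
    intro i
    funext x
    show (A i i) x = 0
    rw [hA]
    simp only
    rw [if_neg (fun hc => hc.1 rfl)]
  refine ⟨fun i => hh i - ∑ j, A i j * g n j, ?_, ?_⟩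
  · -- representation is preserved
    have hTsum : (∑ i, ∑ j, A i j * g n j * g n i) = 0 := by
      set Tsum := ∑ i : Fin n, ∑ j : Fin n, A i j * g n j * g n i with hTs
      have h1 : Tsum = ∑ i : Fin n, ∑ j : Fin n, A j i * g n i * g n j := by
        rw [hTs]
        exact Finset.sum_comm
      have h2 : Tsum = -Tsum := by
        nth_rewrite 1 [h1]
        rw [hTs, ← Finset.sum_neg_distrib]
        refine Finset.sum_congr rfl fun i _ => ?_
        rw [← Finset.sum_neg_distrib]
        refine Finset.sum_congr rfl fun j _ => ?_
        rw [hAanti i j]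
        ring
      have h3 : Tsum + Tsum = 0 := by
        nth_rewrite 2 [h2]
        rw [add_neg_cancel]
      ext m
      have := congrArg (MvPowerSeries.coeff m) h3
      rw [map_add, map_zero] at this
      rw [map_zero]
      linarith
    calc ∑ i, (hh i - ∑ j, A i j * g n j) * g n i
        = (∑ i, hh i * g n i) - ∑ i, ∑ j, A i j * g n j * g n i := by
          rw [← Finset.sum_sub_distrib]
          refine Finset.sum_congr rfl fun i _ => ?_
          rw [sub_mul, Finset.sum_mul]
      _ = Mo (qex n) 1 := by rw [hTsum, hrep, sub_zero]
  · -- vanishing up to degree d+1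
    intro i a ha
    rw [map_sub, map_sum]
    by_cases hcase : dg a < d
    · rw [hvan i a hcase]
      rw [Finset.sum_congr rfl (fun j _ => coeff_mul_g (A i j) j a)]
      have hz : ∀ j : Fin n,
          (if E j ≤ a then MvPowerSeries.coeff (a - E j) (A i j) * N else 0) +
          (if W j ≤ a then MvPowerSeries.coeff (a - W j) (A i j) * 3 else 0) = 0 := by
        intro j
        have hz1 : (if E j ≤ a then MvPowerSeries.coeff (a - E j) (A i j) * N else 0) = 0 := by
          split_ifs with hle
          · have h1 := dg_tsub hle
            rw [dg_E] at h1
            rw [hAco, if_neg, zero_mul]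
            intro hc
            omega
          · rfl
        have hz2 : (if W j ≤ a then MvPowerSeries.coeff (a - W j) (A i j) * 3 else 0) = 0 := by
          split_ifs with hle
          · have h1 := dg_tsub hle
            rw [dg_W hn] at h1
            rw [hAco, if_neg, zero_mul]
            intro hc
            omega
          · rfl
        rw [hz1, hz2, add_zero]
      rw [Finset.sum_congr rfl (fun j _ => hz j), Finset.sum_const_zero, sub_zero]
    · -- dg a = d
      have hda : dg a = d := by omega
      set b := a + E i with hb
      have hbi : b i = a i + (3 * n - 2) := by
        rw [hb, Finsupp.add_apply, E_apply, if_pos rfl]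
      have hdgb : dg b = d + (3 * n - 2) := by
        rw [hb, dg_add, dg_E, hda]
      have hSi : i ∈ S3 b := by
        rw [hS3]
        simp only [Finset.mem_filter, Finset.mem_univ, true_and]
        omega
      have hs_ne : ((S3 b).card : ℝ) ≠ 0 := by
        have := Finset.card_ne_zero_of_mem hSi
        exact_mod_cast this
      -- the W-contributions vanish
      have hz2 : ∀ j : Fin n,
          (if W j ≤ a then MvPowerSeries.coeff (a - W j) (A i j) * 3 else 0) = 0 := by
        intro j
        split_ifs with hle
        · have h1 := dg_tsub hle
          rw [dg_W hn] at h1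
          rw [hAco, if_neg, zero_mul]
          intro hc
          omega
        · rfl
      have hred : ∀ j : Fin n,
          MvPowerSeries.coeff a (A i j * g n j) =
          (if E j ≤ a then MvPowerSeries.coeff (a - E j) (A i j) * N else 0) := by
        intro j
        rw [coeff_mul_g (A i j) j a, hz2 j, add_zero]
      rw [Finset.sum_congr rfl (fun j _ => hred j)]
      -- restrict the sum to (S3 b).erase i
      have houtside : ∀ j ∈ Finset.univ, j ∉ (S3 b).erase i →
          (if E j ≤ a then MvPowerSeries.coeff (a - E j) (A i j) * N else 0) = 0 := by
        intro j _ hj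
        by_cases hji : j = i
        · subst hji
          split_ifs with hle
          · rw [hAdiag, map_zero, zero_mul]
          · rfl
        · have hjS : j ∉ S3 b := fun hmem => hj (Finset.mem_erase.mpr ⟨hji, hmem⟩)
          rw [if_neg]
          intro hle
          apply hjS
          rw [hS3]
          simp only [Finset.mem_filter, Finset.mem_univ, true_and]
          have h1 : (3:ℕ) * n - 2 ≤ a j := (E_le_iff j a).mp hle
          have h2 : b j = a j := by
            rw [hb, Finsupp.add_apply, E_apply, if_neg (by rw [Fin.ext_iff] at hji; omega),
              add_zero]
          omega
      rw [← Finset.sum_subset (Finset.subset_univ ((S3 b).erase i)) houtside]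
      -- evaluate each remaining term
      have hterm : ∀ j ∈ (S3 b).erase i,
          (if E j ≤ a then MvPowerSeries.coeff (a - E j) (A i j) * N else 0) =
          (MvPowerSeries.coeff a (hh i) - MvPowerSeries.coeff (b - E j) (hh j)) /
            ((S3 b).card : ℝ) := by
        intro j hj
        obtain ⟨hji, hjS⟩ := Finset.mem_erase.mp hj
        have hjb : 3 * n - 2 ≤ b j := by
          rw [hS3] at hjS
          simpa using hjS
        have h2 : b j = a j := by
          rw [hb, Finsupp.add_apply, E_apply, if_neg (fun hc => hji (Fin.val_injective hc)),
            add_zero]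
        have hle : E j ≤ a := (E_le_iff j a).mpr (by omega)
        rw [if_pos hle, hAco, if_pos]
        · -- simplify the three exponent expressions
          have e1 : a - E j + E j = a := tsub_add_cancel_of_le hle
          have e2 : a - E j + E i + E j = b := by
            rw [add_right_comm, e1, hb]
          have e3 : a - E j + E i = b - E j := by
            have hle' : E j ≤ b := le_trans hle (by rw [hb]; exact le_self_add)
            have : b - E j + E j = b := tsub_add_cancel_of_le hle'
            have h4 : a - E j + E i + E j = b - E j + E j := by rw [e2, this]
            exact add_right_cancel h4
          rw [e1, e2, e3]
          field_simp
        · constructor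
          · exact fun hc => hji hc.symm
          · have h1 := dg_tsub hle
            rw [dg_E] at h1
            omega
      rw [Finset.sum_congr rfl hterm]
      -- use the linear relation at b
      have hrel : ∑ j ∈ S3 b, MvPowerSeries.coeff (b - E j) (hh j) = 0 := by
        have h0 := hstar b hdgb
        rw [← Finset.sum_subset (Finset.subset_univ (S3 b))
          (fun j _ hj => if_neg (fun hle => hj (by
            rw [hS3]
            simp only [Finset.mem_filter, Finset.mem_univ, true_and]
            exact (E_le_iff j b).mp hle)))] at h0
        rw [← h0]
        refine Finset.sum_congr rfl fun j hj => ?_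
        rw [if_pos]
        rw [hS3] at hj
        simp only [Finset.mem_filter, Finset.mem_univ, true_and] at hj
        exact (E_le_iff j b).mpr hj
      have hrel2 : ∑ j ∈ (S3 b).erase i, MvPowerSeries.coeff (b - E j) (hh j) =
          - MvPowerSeries.coeff a (hh i) := by
        have hba : b - E i = a := by rw [hb, add_tsub_cancel_right]
        have hsplit : MvPowerSeries.coeff (b - E i) (hh i) +
            ∑ j ∈ (S3 b).erase i, MvPowerSeries.coeff (b - E j) (hh j) = 0 := by
          rw [Finset.add_sum_erase _ (fun j => MvPowerSeries.coeff (b - E j) (hh j)) hSi]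
          exact hrel
        rw [hba] at hsplit
        linarith
      -- add everything up
      have hcard : ((S3 b).erase i).card = (S3 b).card - 1 := Finset.card_erase_of_mem hSi
      have hs1 : (1:ℕ) ≤ (S3 b).card := Finset.card_pos.mpr ⟨i, hSi⟩
      have hsumval : (∑ j ∈ (S3 b).erase i,
          (MvPowerSeries.coeff a (hh i) - MvPowerSeries.coeff (b - E j) (hh j)) /
            ((S3 b).card : ℝ)) = MvPowerSeries.coeff a (hh i) := by
        rw [← Finset.sum_div, Finset.sum_sub_distrib, Finset.sum_const, hrel2, hcard,
          nsmul_eq_mul, Nat.cast_sub hs1]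
        have hr : ((((S3 b).card : ℝ)) - 1) * MvPowerSeries.coeff a (hh i) -
            (- MvPowerSeries.coeff a (hh i)) =
            ((S3 b).card : ℝ) * MvPowerSeries.coeff a (hh i) := by ring
        rw [Nat.cast_one, hr, mul_div_cancel_left₀ _ hs_ne]
      rw [hsumval, sub_self]

lemma claim (hn : 1 ≤ n) (hh0 : Fin n → MvPowerSeries (Fin n) ℝ)
    (hrep0 : ∑ i, hh0 i * g n i = Mo (qex n) 1) :
    ∀ d, d + (3 * n - 2) ≤ n * (3 * n - 3) →
    ∃ hh : Fin n → MvPowerSeries (Fin n) ℝ,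
      (∑ i, hh i * g n i = Mo (qex n) 1) ∧
      ∀ i a, dg a < d → MvPowerSeries.coeff a (hh i) = 0 := by
  intro d
  induction d with
  | zero => exact fun _ => ⟨hh0, hrep0, fun i a ha => absurd ha (by omega)⟩
  | succ d ih =>
      intro hle
      obtain ⟨hh, h1, h2⟩ := ih (by omega)
      exact step hn d (by omega) hh h1 h2

lemma NM (hn : 1 ≤ n) : Mo (qex n) 1 ∉ Ideal.span (Set.range (g n)) := by
  intro hmem
  obtain ⟨c, hc⟩ := Ideal.mem_span_range_iff_exists_fun.mp hmem
  obtain ⟨hh, hrep, hvan⟩ : ∃ hh : Fin n → MvPowerSeries (Fin n) ℝ,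
      (∑ i, hh i * g n i = Mo (qex n) 1) ∧
      ∀ i a, dg a < n * (3 * n - 3) - (3 * n - 2) →
        MvPowerSeries.coeff a (hh i) = 0 := by
    by_cases h2 : 2 ≤ n
    · have hED : 3 * n - 2 ≤ n * (3 * n - 3) := by
        calc 3 * n - 2 ≤ 2 * (3 * n - 3) := by omega
          _ ≤ n * (3 * n - 3) := Nat.mul_le_mul_right _ h2
      exact claim hn c hc _ (by omega)
    · have hn1 : n = 1 := by omega
      refine ⟨c, hc, fun i a ha => absurd ha ?_⟩
      subst hn1
      omega
  have h1 : MvPowerSeries.coeff (qex n) (∑ i, hh i * g n i) = 1 := by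
    rw [hrep, MvPowerSeries.coeff_monomial_same]
  have hzero : ∀ i : Fin n, MvPowerSeries.coeff (qex n) (hh i * g n i) = 0 := by
    intro i
    rw [coeff_mul_g]
    have hE : ¬ E i ≤ qex n := by
      rw [E_le_iff, qex_apply]
      omega
    rw [if_neg hE, zero_add]
    split_ifs with hw
    · have hwi : W i i ≤ qex n i := Finsupp.le_def.mp hw i
      rw [W_apply, if_pos rfl, qex_apply] at hwi
      have h2n : 2 ≤ n := by omega
      have hdg := dg_tsub hw
      rw [dg_W hn, dg_qex] at hdg
      have hED : 3 * n - 2 ≤ n * (3 * n - 3) := by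
        calc 3 * n - 2 ≤ 2 * (3 * n - 3) := by omega
          _ ≤ n * (3 * n - 3) := Nat.mul_le_mul_right _ h2n
      have hsmall : dg (qex n - W i) < n * (3 * n - 3) - (3 * n - 2) := by omega
      rw [hvan i _ hsmall, zero_mul]
    · rfl
  rw [map_sum, Finset.sum_congr rfl (fun i _ => hzero i), Finset.sum_const_zero] at h1
  exact one_ne_zero h1.symm

lemma euler (hn : 1 ≤ n) :
    (∑ i : Fin n, MvPowerSeries.X i * g n i) =
      MvPowerSeries.C (σ := Fin n) (R := ℝ) ((3 * n - 1 : ℕ) : ℝ) * fExample n + Mo (threes n) 1 := by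
  have hterm : ∀ i : Fin n, MvPowerSeries.X i * g n i =
      Mo (Finsupp.single i (3 * n - 1)) ((3 * n - 1 : ℕ) : ℝ) + Mo (threes n) 3 := by
    intro i
    unfold g
    rw [show (MvPowerSeries.X i : MvPowerSeries (Fin n) ℝ) = Mo (Finsupp.single i 1) 1 from rfl,
      mul_add, MvPowerSeries.monomial_mul_monomial, MvPowerSeries.monomial_mul_monomial,
      one_mul, one_mul]
    have e1 : Finsupp.single i 1 + E i = Finsupp.single i (3 * n - 1) := by
      unfold E
      rw [← Finsupp.single_add]
      congr 1
      omega
    have e2 : Finsupp.single i 1 + W i = threes n := by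
      ext k
      rw [Finsupp.add_apply, Finsupp.single_apply, W_apply', threes_apply]
      by_cases hk : (k : ℕ) = (i : ℕ)
      · rw [if_pos hk, if_pos (Fin.val_injective hk).symm]
      · rw [if_neg hk, if_neg (fun hc => hk (by rw [hc]))]
    rw [e1, e2]
  rw [Finset.sum_congr rfl (fun i _ => hterm i), Finset.sum_add_distrib, Finset.sum_const,
    Finset.card_univ, Fintype.card_fin]
  rw [fExample_eq, mul_add, Finset.mul_sum]
  have hCm : ∀ μ : Fin n →₀ ℕ, MvPowerSeries.C (σ := Fin n) (R := ℝ) ((3 * n - 1 : ℕ) : ℝ) * Mo μ 1 =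
      Mo μ ((3 * n - 1 : ℕ) : ℝ) := by
    intro μ
    rw [show MvPowerSeries.C (σ := Fin n) (R := ℝ) ((3 * n - 1 : ℕ) : ℝ) =
        Mo 0 ((3 * n - 1 : ℕ) : ℝ) from rfl, MvPowerSeries.monomial_mul_monomial, zero_add,
      mul_one]
  simp only [hCm]
  rw [add_assoc]
  congr 1
  have hsmul : (n : ℕ) • Mo (threes n) (3 : ℝ) = Mo (threes n) ((n : ℝ) * 3) := by
    rw [← map_nsmul]
    congr 1
    rw [nsmul_eq_mul]
  rw [hsmul, ← map_add]
  congr 1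
  have : ((3 * n - 1 : ℕ) : ℝ) = 3 * (n : ℝ) - 1 := by
    rw [Nat.cast_sub (by omega)]
    push_cast
    ring
  rw [this]
  ring

lemma mon_pow_threes (hn : 1 ≤ n) : (Mo (threes n) 1) ^ n = Mo (vv n 0) 1 := by
  have h2 : (n • threes n : Fin n →₀ ℕ) = vv n 0 := by
    ext j
    rw [Finsupp.smul_apply, threes_apply, vv_apply, smul_eq_mul]
    simp only [Nat.not_lt_zero, if_false]
    omega
  rw [mon_pow, h2]

lemma mon_pow_threes' (hn : 1 ≤ n) : (Mo (threes n) 1) ^ (n - 1) = Mo (qex n) 1 := by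
  have h2 : ((n - 1) • threes n : Fin n →₀ ℕ) = qex n := by
    ext j
    rw [Finsupp.smul_apply, threes_apply, qex_apply, smul_eq_mul]
    omega
  rw [mon_pow, h2]

end Stmt6


/-- The class `aₙ` of `fₙ` in `Aₙ = ℝ[[x₁,…,xₙ]]/Δ(fₙ)` satisfies `aₙ^{n−1} ≠ 0` and
`aₙⁿ = 0`; equivalently `fₙ^{n−1} ∉ Δ(fₙ)` and `fₙⁿ ∈ Δ(fₙ)`. -/
theorem stmt_6 (n : ℕ) (hn : 1 ≤ n) :
    (Ideal.Quotient.mk (jacobianIdeal (fExample n)) (fExample n)) ^ (n - 1) ≠ 0 ∧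
    (Ideal.Quotient.mk (jacobianIdeal (fExample n)) (fExample n)) ^ n = 0 ∧
    fExample n ^ (n - 1) ∉ jacobianIdeal (fExample n) ∧
    fExample n ^ n ∈ jacobianIdeal (fExample n) := by
  classical
  open Stmt6 in
  have hI : jacobianIdeal (fExample n) = Ideal.span (Set.range (Stmt6.g n)) := by
    unfold jacobianIdeal
    rw [funext (Stmt6.pderiv_fExample hn)]
  set I := jacobianIdeal (fExample n) with hIdef
  set q := Ideal.Quotient.mk I with hq
  set N : ℝ := ((3 * n - 1 : ℕ) : ℝ) with hNdef
  have hN : N ≠ 0 := Stmt6.N_ne hn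
  have hrel : q (MvPowerSeries.C (σ := Fin n) (R := ℝ) N) * q (fExample n) +
      q (Stmt6.Mo (Stmt6.threes n) 1) = 0 := by
    rw [← map_mul, ← map_add, ← Stmt6.euler hn, Ideal.Quotient.eq_zero_iff_mem, hI]
    refine Ideal.sum_mem _ fun i _ => Ideal.mul_mem_left _ _ ?_
    exact Ideal.subset_span (Set.mem_range_self i)
  have hPf : q (Stmt6.Mo (Stmt6.threes n) 1) =
      -(q (MvPowerSeries.C (σ := Fin n) (R := ℝ) N) * q (fExample n)) :=
    eq_neg_of_add_eq_zero_right hrel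
  have hCinv : q (MvPowerSeries.C (σ := Fin n) (R := ℝ) N) * q (MvPowerSeries.C (σ := Fin n) (R := ℝ) N⁻¹) = 1 := by
    rw [← map_mul, ← map_mul, mul_inv_cancel₀ hN, map_one, map_one]
  have hiff : ∀ k : ℕ, (q (fExample n) ^ k = 0 ↔ q (Stmt6.Mo (Stmt6.threes n) 1) ^ k = 0) := by
    intro k
    have hPk : q (Stmt6.Mo (Stmt6.threes n) 1) ^ k =
        (-1) ^ k * q (MvPowerSeries.C (σ := Fin n) (R := ℝ) N) ^ k * q (fExample n) ^ k := by
      have hPf' : q (Stmt6.Mo (Stmt6.threes n) 1) =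
          (-1) * (q (MvPowerSeries.C (σ := Fin n) (R := ℝ) N) * q (fExample n)) := by
        rw [hPf]; ring
      rw [hPf', mul_pow, mul_pow]
      ring
    constructor
    · intro h
      rw [hPk, h, mul_zero]
    · intro h
      have e1 : ((-1 : MvPowerSeries (Fin n) ℝ ⧸ I)) ^ k * (-1) ^ k = 1 := by
        rw [← mul_pow]
        norm_num
      have e2 : q (MvPowerSeries.C (σ := Fin n) (R := ℝ) N⁻¹) ^ k *
          q (MvPowerSeries.C (σ := Fin n) (R := ℝ) N) ^ k = 1 := by
        rw [← mul_pow, mul_comm, hCinv, one_pow]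
      have h1 : (-1 : MvPowerSeries (Fin n) ℝ ⧸ I) ^ k *
          q (MvPowerSeries.C (σ := Fin n) (R := ℝ) N⁻¹) ^ k * q (Stmt6.Mo (Stmt6.threes n) 1) ^ k =
          q (fExample n) ^ k := by
        rw [hPk]
        calc (-1 : MvPowerSeries (Fin n) ℝ ⧸ I) ^ k * q (MvPowerSeries.C (σ := Fin n) (R := ℝ) N⁻¹) ^ k *
            ((-1) ^ k * q (MvPowerSeries.C (σ := Fin n) (R := ℝ) N) ^ k * q (fExample n) ^ k) =
            ((-1) ^ k * (-1) ^ k) * (q (MvPowerSeries.C (σ := Fin n) (R := ℝ) N⁻¹) ^ k *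
              q (MvPowerSeries.C (σ := Fin n) (R := ℝ) N) ^ k) * q (fExample n) ^ k := by ring
          _ = q (fExample n) ^ k := by rw [e1, e2, one_mul, one_mul]
      rw [← h1, h, mul_zero]
  have hqPn : q (Stmt6.Mo (Stmt6.threes n) 1) ^ n = 0 := by
    rw [← map_pow, Stmt6.mon_pow_threes hn, Ideal.Quotient.eq_zero_iff_mem, hI]
    exact Stmt6.mem_Pn hn
  have hqPn1 : q (Stmt6.Mo (Stmt6.threes n) 1) ^ (n - 1) ≠ 0 := by
    rw [← map_pow, Stmt6.mon_pow_threes' hn, Ne, Ideal.Quotient.eq_zero_iff_mem, hI]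
    exact Stmt6.NM hn
  have p1 : q (fExample n) ^ (n - 1) ≠ 0 := fun h => hqPn1 ((hiff (n - 1)).mp h)
  have p2 : q (fExample n) ^ n = 0 := (hiff n).mpr hqPn
  refine ⟨p1, p2, ?_, ?_⟩
  · intro hmem
    have h0 : q (fExample n ^ (n - 1)) = 0 := (Ideal.Quotient.eq_zero_iff_mem).mpr hmem
    rw [map_pow] at h0
    exact p1 h0
  · have := p2
    rw [← map_pow] at this
    exact (Ideal.Quotient.eq_zero_iff_mem).mp this
end

section
/- For n ≥ 1, let fₙ = x₁^{3n−1} + ⋯ + xₙ^{3n−1} + (x₁·x₂·⋯·xₙ)³ ∈ ℝ[[x₁,…,xₙ]] with Jacobian ideal Δ(fₙ). Then (x₁·x₂·⋯·xₙ)^{3n−1} ∈ Δ(fₙ), while (x₁·x₂·⋯·xₙ)^{3(n−1)} ∉ Δ(fₙ). -/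
namespace Stmt7Aux

open MvPowerSeries Finsupp

theorem coeff_mvPderiv (i : Fin n) (f : MvPowerSeries (Fin n) ℝ) (m : Fin n →₀ ℕ) :
    MvPowerSeries.coeff m (mvPderiv i f)
      = ((m i : ℝ) + 1) * MvPowerSeries.coeff (m + Finsupp.single i 1) f := by
  rfl

theorem mvPderiv_monomial (i : Fin n) (d : Fin n →₀ ℕ) (c : ℝ) :
    mvPderiv i (monomial d c) = monomial (d - single i 1) ((d i : ℝ) * c) := by
  apply MvPowerSeries.ext
  intro m
  rw [coeff_mvPderiv, coeff_monomial, coeff_monomial]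
  by_cases h : m + single i 1 = d
  · have hdi : d i = m i + 1 := by
      rw [← h]; simp
    have hm : m = d - single i 1 := by
      rw [← h, add_tsub_cancel_right]
    rw [if_pos h, if_pos hm, hdi]
    push_cast
    ring
  · rw [if_neg h, mul_zero]
    by_cases hm : m = d - single i 1
    · rw [if_pos hm]
      by_cases hdi : d i = 0
      · rw [hdi]; norm_num
      · exfalso
        apply h
        rw [hm, tsub_add_cancel_of_le]
        rw [Finsupp.single_le_iff]
        omega
    · rw [if_neg hm]

theorem mvPderiv_add (i : Fin n) (f g : MvPowerSeries (Fin n) ℝ) :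
    mvPderiv i (f + g) = mvPderiv i f + mvPderiv i g := by
  apply MvPowerSeries.ext
  intro m
  simp only [coeff_mvPderiv, map_add, mul_add]

theorem mvPderiv_sum {ι : Type*} (s : Finset ι) (F : ι → MvPowerSeries (Fin n) ℝ) (i : Fin n) :
    mvPderiv i (∑ j ∈ s, F j) = ∑ j ∈ s, mvPderiv i (F j) := by
  classical
  induction s using Finset.induction_on with
  | empty =>
    apply MvPowerSeries.ext; intro m
    simp [coeff_mvPderiv]
  | insert _ _ hj ih =>
    rw [Finset.sum_insert hj, Finset.sum_insert hj, mvPderiv_add, ih]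

theorem prod_monomial' {n : ℕ} {ι : Type*} (s : Finset ι) (d : ι → (Fin n →₀ ℕ)) (c : ι → ℝ) :
    (∏ j ∈ s, monomial (d j) (c j)) = monomial (∑ j ∈ s, d j) (∏ j ∈ s, c j) := by
  classical
  induction s using Finset.induction_on with
  | empty => simp
  | insert _ _ hj ih =>
    rw [Finset.prod_insert hj, Finset.sum_insert hj, Finset.prod_insert hj, ih,
      monomial_mul_monomial]

theorem prodX_pow {n : ℕ} (e : ℕ) :
    (∏ i : Fin n, (X i : MvPowerSeries (Fin n) ℝ)) ^ e
      = monomial (∑ i : Fin n, single i e) 1 := by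
  rw [← Finset.prod_pow]
  have h : ∀ i : Fin n, (X i : MvPowerSeries (Fin n) ℝ) ^ e = monomial (single i e) 1 :=
    fun i => X_pow_eq i e
  rw [Finset.prod_congr rfl (fun i _ => h i), prod_monomial']
  rw [Finset.prod_const_one]

theorem sumsingle_apply {n : ℕ} (a : ℕ) (i : Fin n) :
    (∑ j : Fin n, single j a) i = a := by
  classical
  rw [Finsupp.finset_sum_apply]
  rw [Finset.sum_eq_single i]
  · simp
  · intro j _ hj
    exact single_eq_of_ne' hj
  · intro h; exact absurd (Finset.mem_univ i) h

theorem single_sub_single {n : ℕ} (i : Fin n) (a b : ℕ) :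
    (single i a - single i b : Fin n →₀ ℕ) = single i (a - b) := by
  ext j
  rw [Finsupp.tsub_apply]
  rcases eq_or_ne i j with rfl | h
  · simp
  · simp [single_eq_of_ne' h]

noncomputable def w2 {n : ℕ} (i : Fin n) : Fin n →₀ ℕ :=
  (∑ j : Fin n, single j 3) - single i 1

theorem w2_apply {n : ℕ} (i j : Fin n) : w2 i j = if j = i then 2 else 3 := by
  rw [w2, Finsupp.tsub_apply, sumsingle_apply]
  rcases eq_or_ne j i with rfl | h
  · simp
  · rw [single_apply, if_neg (Ne.symm h), if_neg h]
    omega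

theorem mvPderiv_fExample (m : ℕ) (i : Fin (m+1)) :
    mvPderiv i (fExample (m+1))
      = monomial (single i (3*m+1)) ((3*m+2 : ℕ) : ℝ) + monomial (w2 i) 3 := by
  have he : 3 * (m+1) - 1 = 3*m+2 := by omega
  rw [fExample, he, mvPderiv_add, mvPderiv_sum]
  congr 1
  · have hterm : ∀ j : Fin (m+1), mvPderiv i ((X j : MvPowerSeries (Fin (m+1)) ℝ) ^ (3*m+2))
        = if j = i then monomial (single i (3*m+1)) ((3*m+2 : ℕ) : ℝ) else 0 := by
      intro j
      rw [X_pow_eq, mvPderiv_monomial]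
      rcases eq_or_ne j i with rfl | h
      · rw [if_pos rfl, single_sub_single]
        norm_num
      · rw [if_neg h, single_eq_of_ne' h]
        norm_num
    rw [Finset.sum_congr rfl (fun j _ => hterm j)]
    simp
  · rw [prodX_pow, mvPderiv_monomial, sumsingle_apply, w2]
    norm_num

theorem sum_w2 (m : ℕ) :
    (∑ i : Fin (m+1), w2 i) = ∑ j : Fin (m+1), single j (3*m+2) := by
  ext j
  rw [finset_sum_apply, sumsingle_apply]
  have h1 : ∀ i : Fin (m+1),
      w2 i j + (if j = i then 3 else 0) = (if j = i then 2 else 0) + 3 := by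
    intro i; rw [w2_apply]; split <;> omega
  have h2 : (∑ i : Fin (m+1), (w2 i j + if j = i then 3 else 0))
      = (∑ i : Fin (m+1), ((if j = i then 2 else 0) + 3)) :=
    Finset.sum_congr rfl (fun i _ => h1 i)
  rw [Finset.sum_add_distrib, Finset.sum_add_distrib, Finset.sum_ite_eq, Finset.sum_ite_eq,
    Finset.sum_const, Finset.card_univ, Fintype.card_fin, if_pos (Finset.mem_univ j),
    if_pos (Finset.mem_univ j)] at h2
  simp only [smul_eq_mul] at h2
  omega

theorem part1 (m : ℕ) :
    (∏ i : Fin (m+1), (X i : MvPowerSeries (Fin (m+1)) ℝ)) ^ (3*m+1)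
      ∈ jacobianIdeal (fExample (m+1)) := by
  classical
  set I := jacobianIdeal (fExample (m+1)) with hI
  set P : MvPowerSeries (Fin (m+1)) ℝ := ∏ i, X i with hP
  set a : ℝ := ((3*m+2 : ℕ) : ℝ) with ha
  have hD : ∀ i, mvPderiv i (fExample (m+1)) ∈ I := fun i =>
    Ideal.subset_span ⟨i, rfl⟩
  set π := Ideal.Quotient.mk I with hπ
  have hπD : ∀ i, π (mvPderiv i (fExample (m+1))) = 0 := fun i =>
    (Ideal.Quotient.eq_zero_iff_mem).2 (hD i)
  have hmon : ∀ i : Fin (m+1), π (monomial (single i (3*m+1)) a)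
        = - π (monomial (w2 i) 3) := by
    intro i
    have h := congrArg π (mvPderiv_fExample m i)
    rw [hπD, map_add] at h
    exact eq_neg_of_add_eq_zero_left h.symm
  have hprod1 : (∏ i : Fin (m+1), monomial (single i (3*m+1)) a)
      = C (a^(m+1)) * P ^ (3*m+1) := by
    rw [prod_monomial', prodX_pow, ← monomial_zero_eq_C_apply, monomial_mul_monomial,
      zero_add, mul_one, Finset.prod_const, Finset.card_univ, Fintype.card_fin]
  have hprod2 : (∏ i : Fin (m+1), monomial (w2 i) (3:ℝ))
      = C ((3:ℝ)^(m+1)) * P ^ (3*m+2) := by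
    rw [prod_monomial', sum_w2, prodX_pow, ← monomial_zero_eq_C_apply, monomial_mul_monomial,
      zero_add, mul_one, Finset.prod_const, Finset.card_univ, Fintype.card_fin]
  have key : π (C (a^(m+1)) * P^(3*m+1))
      = π (C ((-3:ℝ)^(m+1)) * P^(3*m+2)) := by
    rw [← hprod1, map_prod]
    have : (∏ i : Fin (m+1), π (monomial (single i (3*m+1)) a))
        = ∏ i : Fin (m+1), ((-1) * π (monomial (w2 i) 3)) := by
      refine Finset.prod_congr rfl fun i _ => ?_
      rw [hmon i]
      ring
    have h3 : (C : ℝ →+* MvPowerSeries (Fin (m+1)) ℝ) ((-3:ℝ)^(m+1))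
        = (-1)^(m+1) * C ((3:ℝ)^(m+1)) := by
      rw [neg_pow (3:ℝ), map_mul, map_pow, map_neg, map_one]
    rw [this, Finset.prod_mul_distrib, Finset.prod_const, Finset.card_univ, Fintype.card_fin,
      ← map_prod, hprod2, h3, mul_assoc]
    simp only [map_mul, map_pow, map_neg, map_one]
  have hmem : C (a^(m+1)) * P^(3*m+1)
      - C ((-3:ℝ)^(m+1)) * P^(3*m+2) ∈ I := by
    rw [← Ideal.Quotient.mk_eq_mk_iff_sub_mem]
    exact key
  set w : MvPowerSeries (Fin (m+1)) ℝ :=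
    C (a^(m+1)) - C ((-3:ℝ)^(m+1)) * P with hw
  have hfac : C (a^(m+1)) * P^(3*m+1)
      - C ((-3:ℝ)^(m+1)) * P^(3*m+2) = P^(3*m+1) * w := by
    rw [hw]
    have : P ^ (3*m+2) = P^(3*m+1) * P := by rw [← pow_succ]
    rw [this]; ring
  rw [hfac] at hmem
  have hPconst : constantCoeff P = 0 := by
    rw [hP, map_prod]
    exact Finset.prod_eq_zero (Finset.mem_univ 0) (constantCoeff_X 0)
  have hwconst : constantCoeff w = a^(m+1) := by
    rw [hw, map_sub, map_mul, constantCoeff_C, constantCoeff_C, hPconst, mul_zero, sub_zero]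
  have hwu : IsUnit w := by
    rw [isUnit_iff_constantCoeff, hwconst]
    refine (isUnit_iff_ne_zero).2 (pow_ne_zero _ ?_)
    rw [ha]
    positivity
  obtain ⟨winv, hwinv⟩ := isUnit_iff_exists_inv.mp hwu
  have : P^(3*m+1) = (P^(3*m+1) * w) * winv := by
    rw [mul_assoc, hwinv, mul_one]
  rw [this]
  exact Ideal.mul_mem_right winv I hmem

def SuppRep (m : ℕ) (u : Fin (m+1) →₀ ℕ) : Prop :=
  ∃ k : Fin (m+1) → ℕ, ∀ i, u i + 3 * (∑ j, k j) = 3*m + (3*m+2) * k i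

noncomputable def cst (m : ℕ) : ℝ := -3 / ((3*m+2 : ℕ) : ℝ)

theorem cst_mul (m : ℕ) : ((3*m+2 : ℕ) : ℝ) * cst m = -3 := by
  rw [cst]
  have : ((3*m+2 : ℕ) : ℝ) ≠ 0 := by positivity
  field_simp

open Classical in
noncomputable def alphaF (m : ℕ) (u : Fin (m+1) →₀ ℕ) : ℝ :=
  if SuppRep m u then (cst m) ^ (3*m*(m+1) - ∑ j, u j) else 0

theorem rep_sum (m : ℕ) (u : Fin (m+1) →₀ ℕ) (k : Fin (m+1) → ℕ)
    (hk : ∀ i, u i + 3 * (∑ j, k j) = 3*m + (3*m+2) * k i) :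
    (∑ j, u j) + (∑ j, k j) = 3*m*(m+1) := by
  have h : (∑ i : Fin (m+1), (u i + 3 * (∑ j, k j)))
      = ∑ i : Fin (m+1), (3*m + (3*m+2) * k i) :=
    Finset.sum_congr rfl (fun i _ => hk i)
  rw [Finset.sum_add_distrib, Finset.sum_add_distrib, Finset.sum_const, Finset.sum_const,
    ← Finset.mul_sum, Finset.card_univ, Fintype.card_fin, smul_eq_mul, smul_eq_mul] at h
  have hz : ((∑ j, u j : ℕ) : ℤ) + (m+1) * (3 * (∑ j, k j)) 
      = (m+1) * (3*m) + (3*m+2) * (∑ j, k j) := by exact_mod_cast h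
  have goal : ((∑ j, u j : ℕ) : ℤ) + (∑ j, k j : ℕ) = 3*m*(m+1) := by linarith
  exact_mod_cast goal

theorem sum_coords_add (m : ℕ) (v w : Fin (m+1) →₀ ℕ) :
    (∑ j, (v + w) j) = (∑ j, v j) + (∑ j, w j) := by
  simp [Finsupp.add_apply, Finset.sum_add_distrib]

theorem sum_coords_single (m : ℕ) (i : Fin (m+1)) (a : ℕ) :
    (∑ j, (single i a : Fin (m+1) →₀ ℕ) j) = a := by
  simp [Finsupp.single_apply]

theorem sum_coords_w2 (m : ℕ) (i : Fin (m+1)) :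
    (∑ j, w2 i j) = 3*m+2 := by
  have h1 : ∀ j : Fin (m+1),
      w2 i j + (if j = i then 3 else 0) = (if j = i then 2 else 0) + 3 := by
    intro j; rw [w2_apply]; split <;> omega
  have h2 : (∑ j : Fin (m+1), (w2 i j + if j = i then 3 else 0))
      = (∑ j : Fin (m+1), ((if j = i then 2 else 0) + 3)) :=
    Finset.sum_congr rfl (fun j _ => h1 j)
  rw [Finset.sum_add_distrib, Finset.sum_add_distrib, Finset.sum_ite_eq', Finset.sum_ite_eq',
    Finset.sum_const, Finset.card_univ, Fintype.card_fin, if_pos (Finset.mem_univ i),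
    if_pos (Finset.mem_univ i)] at h2
  simp only [smul_eq_mul] at h2
  omega

theorem rep_up (m : ℕ) (v : Fin (m+1) →₀ ℕ) (i : Fin (m+1)) (k' : Fin (m+1) → ℕ)
    (hk' : ∀ j, (v + w2 i) j + 3 * (∑ j', k' j') = 3*m + (3*m+2) * k' j) :
    ∀ j, (v + single i (3*m+1)) j + 3 * (∑ j', (k' j' + if j' = i then 1 else 0))
      = 3*m + (3*m+2) * (k' j + if j = i then 1 else 0) := by
  have hKs : (∑ j', (k' j' + if j' = i then 1 else 0)) = (∑ j', k' j') + 1 := by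
    rw [Finset.sum_add_distrib, Finset.sum_ite_eq', if_pos (Finset.mem_univ i)]
  intro j
  have h := hk' j
  rw [Finsupp.add_apply, w2_apply] at h
  rw [Finsupp.add_apply, Finsupp.single_apply, hKs]
  rcases eq_or_ne j i with rfl | hj
  · rw [if_pos rfl] at h
    rw [if_pos rfl, if_pos rfl]
    simp only [mul_add, mul_one]
    linarith
  · rw [if_neg hj] at h
    rw [if_neg (Ne.symm hj), if_neg hj]
    simp only [add_zero]
    linarith

theorem rep_down (m : ℕ) (v : Fin (m+1) →₀ ℕ) (i : Fin (m+1)) (k : Fin (m+1) → ℕ)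
    (hk : ∀ j, (v + single i (3*m+1)) j + 3 * (∑ j', k j') = 3*m + (3*m+2) * k j) :
    SuppRep m (v + w2 i) := by
  have hki : 1 ≤ k i := by
    have h := hk i
    rw [Finsupp.add_apply, Finsupp.single_apply, if_pos rfl] at h
    rcases Nat.eq_zero_or_pos (k i) with h0 | h1
    · rw [h0, mul_zero] at h; omega
    · exact h1
  refine ⟨fun j => k j - (if j = i then 1 else 0), ?_⟩
  have hKs : (∑ j', (k j' - if j' = i then 1 else 0)) + 1 = ∑ j', k j' := by
    have hpt : ∀ j', (k j' - if j' = i then 1 else 0) + (if j' = i then 1 else 0) = k j' := by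
      intro j'
      by_cases hj' : j' = i
      · subst hj'; simp; omega
      · simp [hj']
    have h2 : (∑ j', ((k j' - if j' = i then 1 else 0) + (if j' = i then 1 else 0)))
        = ∑ j', k j' := Finset.sum_congr rfl (fun j' _ => hpt j')
    rw [Finset.sum_add_distrib, Finset.sum_ite_eq', if_pos (Finset.mem_univ i)] at h2
    exact h2
  intro j
  dsimp only
  have h := hk j
  rw [Finsupp.add_apply, Finsupp.single_apply] at h
  rw [Finsupp.add_apply, w2_apply]
  rcases eq_or_ne j i with rfl | hj
  · rw [if_pos rfl] at h
    rw [if_pos rfl, if_pos rfl]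
    obtain ⟨ki', hki'⟩ : ∃ t, k j = t + 1 := ⟨k j - 1, by omega⟩
    rw [hki'] at h ⊢
    simp only [Nat.add_sub_cancel, mul_add, mul_one] at h ⊢
    linarith
  · rw [if_neg (Ne.symm hj)] at h
    rw [if_neg hj, if_neg hj]
    simp only [add_zero, Nat.sub_zero] at h ⊢
    linarith

theorem key_shift (m : ℕ) (v : Fin (m+1) →₀ ℕ) (i : Fin (m+1)) :
    alphaF m (v + single i (3*m+1)) = cst m * alphaF m (v + w2 i) := by
  classical
  by_cases h2 : SuppRep m (v + w2 i)
  · obtain ⟨k', hk'⟩ := h2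
    have h1 : SuppRep m (v + single i (3*m+1)) :=
      ⟨fun j' => k' j' + if j' = i then 1 else 0, rep_up m v i k' hk'⟩
    rw [alphaF, alphaF, if_pos h1, if_pos ⟨k', hk'⟩]
    have hs2 : (∑ j, (v + w2 i) j) + (∑ j, k' j) = 3*m*(m+1) := rep_sum m _ k' hk'
    have hsum1 : (∑ j, (v + single i (3*m+1)) j) = (∑ j, v j) + (3*m+1) := by
      rw [sum_coords_add, sum_coords_single]
    have hsum2 : (∑ j, (v + w2 i) j) = (∑ j, v j) + (3*m+2) := by
      rw [sum_coords_add, sum_coords_w2]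
    rw [hsum1]
    rw [hsum2] at hs2 ⊢
    have e1 : 3*m*(m+1) - ((∑ j, v j) + (3*m+1)) = (∑ j, k' j) + 1 := by omega
    have e2 : 3*m*(m+1) - ((∑ j, v j) + (3*m+2)) = (∑ j, k' j) := by omega
    rw [e1, e2, pow_succ]
    ring
  · have h1 : ¬ SuppRep m (v + single i (3*m+1)) := by
      intro ⟨k, hk⟩
      exact h2 (rep_down m v i k hk)
    rw [alphaF, alphaF, if_neg h1, if_neg h2, mul_zero]

noncomputable def Tbig (m : ℕ) : Fin (m+1) →₀ ℕ :=
  equivFunOnFinite.symm (fun _ => 3*m*(m+1))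

theorem Tbig_apply (m : ℕ) (j : Fin (m+1)) : Tbig m j = 3*m*(m+1) := rfl

theorem alphaF_le (m : ℕ) (u : Fin (m+1) →₀ ℕ) (h : alphaF m u ≠ 0) : u ≤ Tbig m := by
  rw [alphaF] at h
  by_cases hr : SuppRep m u
  · obtain ⟨k, hk⟩ := hr
    have hs := rep_sum m u k hk
    rw [Finsupp.le_def]
    intro j
    rw [Tbig_apply]
    have : u j ≤ ∑ j', u j' :=
      Finset.single_le_sum (f := fun j' => u j') (fun _ _ => Nat.zero_le _) (Finset.mem_univ j)
    omega
  · rw [if_neg hr] at h; exact absurd rfl h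

theorem alphaF_support_finite (m : ℕ) : (Function.support (alphaF m)).Finite := by
  apply Set.Finite.subset (Finset.Iic (Tbig m)).finite_toSet
  intro u hu
  simp only [Finset.coe_Iic, Set.mem_Iic]
  exact alphaF_le m u hu

noncomputable def lamb (m : ℕ) (h : MvPowerSeries (Fin (m+1)) ℝ) : ℝ :=
  ∑ u ∈ Finset.Iic (Tbig m), alphaF m u * coeff u h

theorem lamb_support_subset (m : ℕ) (h : MvPowerSeries (Fin (m+1)) ℝ) :
    (Function.support fun u => alphaF m u * coeff u h) ⊆ ↑(Finset.Iic (Tbig m)) := by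
  intro u hu
  have : alphaF m u ≠ 0 := left_ne_zero_of_mul hu
  simp only [Finset.coe_Iic, Set.mem_Iic]
  exact alphaF_le m u this

theorem lamb_eq_finsum (m : ℕ) (h : MvPowerSeries (Fin (m+1)) ℝ) :
    lamb m h = ∑ᶠ u, alphaF m u * coeff u h :=
  (finsum_eq_finset_sum_of_support_subset _ (lamb_support_subset m h)).symm

theorem lamb_add (m : ℕ) (h₁ h₂ : MvPowerSeries (Fin (m+1)) ℝ) :
    lamb m (h₁ + h₂) = lamb m h₁ + lamb m h₂ := by
  rw [lamb, lamb, lamb, ← Finset.sum_add_distrib]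
  refine Finset.sum_congr rfl fun u _ => ?_
  rw [map_add, mul_add]

theorem lamb_finset_sum (m : ℕ) {ι : Type*} (s : Finset ι)
    (F : ι → MvPowerSeries (Fin (m+1)) ℝ) :
    lamb m (∑ i ∈ s, F i) = ∑ i ∈ s, lamb m (F i) := by
  classical
  induction s using Finset.induction_on with
  | empty => simp [lamb]
  | insert _ _ hj ih =>
    rw [Finset.sum_insert hj, Finset.sum_insert hj, lamb_add, ih]

theorem lamb_mul_monomial (m : ℕ) (g : MvPowerSeries (Fin (m+1)) ℝ)
    (w : Fin (m+1) →₀ ℕ) (c0 : ℝ) :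
    lamb m (g * monomial w c0)
      = ∑ᶠ v, alphaF m (v + w) * coeff v g * c0 := by
  rw [lamb_eq_finsum]
  set F : (Fin (m+1) →₀ ℕ) → ℝ :=
    fun u => alphaF m u * coeff u (g * monomial w c0) with hF
  have hinj : Function.Injective (fun v : Fin (m+1) →₀ ℕ => v + w) := add_left_injective w
  have hsub : Function.support F ⊆ Set.range (fun v : Fin (m+1) →₀ ℕ => v + w) := by
    intro u hu
    have : coeff u (g * monomial w c0) ≠ 0 := right_ne_zero_of_mul hu
    rw [coeff_mul_monomial] at this
    by_cases hle : w ≤ u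
    · exact ⟨u - w, tsub_add_cancel_of_le hle⟩
    · rw [if_neg hle] at this; exact absurd rfl this
  have hind : Set.indicator (Set.range fun v : Fin (m+1) →₀ ℕ => v + w) F = F :=
    Set.indicator_eq_self.2 hsub
  calc ∑ᶠ u, F u = ∑ᶠ u, Set.indicator (Set.range fun v : Fin (m+1) →₀ ℕ => v + w) F u := by
        rw [hind]
    _ = ∑ᶠ u ∈ Set.range (fun v : Fin (m+1) →₀ ℕ => v + w), F u := (finsum_mem_def _ _).symm
    _ = ∑ᶠ v, F (v + w) := finsum_mem_range hinj
    _ = ∑ᶠ v, alphaF m (v + w) * coeff v g * c0 := by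
        refine finsum_congr fun v => ?_
        rw [hF]
        simp only
        rw [coeff_mul_monomial, if_pos (le_add_self), add_tsub_cancel_right, mul_assoc]

theorem shifted_support_finite (m : ℕ) (g : MvPowerSeries (Fin (m+1)) ℝ)
    (w : Fin (m+1) →₀ ℕ) (c0 : ℝ) :
    (Function.support fun v => alphaF m (v + w) * coeff v g * c0).Finite := by
  have hinj : Function.Injective (fun v : Fin (m+1) →₀ ℕ => v + w) := add_left_injective w
  apply Set.Finite.subset (Set.Finite.preimage hinj.injOn (alphaF_support_finite m))
  intro v hv
  have h1 : alphaF m (v + w) * coeff v g ≠ 0 := left_ne_zero_of_mul hv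
  exact left_ne_zero_of_mul h1

theorem lamb_gD_zero (m : ℕ) (i : Fin (m+1)) (g : MvPowerSeries (Fin (m+1)) ℝ) :
    lamb m (g * mvPderiv i (fExample (m+1))) = 0 := by
  rw [mvPderiv_fExample, mul_add, lamb_add, lamb_mul_monomial, lamb_mul_monomial,
    ← finsum_add_distrib (shifted_support_finite m g _ _) (shifted_support_finite m g _ _)]
  have hzero : ∀ v : Fin (m+1) →₀ ℕ,
      alphaF m (v + single i (3*m+1)) * coeff v g * ((3*m+2 : ℕ) : ℝ)
        + alphaF m (v + w2 i) * coeff v g * 3 = 0 := by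
    intro v
    rw [key_shift]
    have := cst_mul m
    linear_combination (alphaF m (v + w2 i) * (coeff v) g) * this
  rw [finsum_congr hzero, finsum_zero]

theorem lamb_target (m : ℕ) :
    lamb m ((∏ i : Fin (m+1), (X i : MvPowerSeries (Fin (m+1)) ℝ)) ^ (3*m)) = 1 := by
  classical
  rw [prodX_pow, lamb]
  set T : Fin (m+1) →₀ ℕ := ∑ j : Fin (m+1), single j (3*m) with hT
  have hsum : (∑ u ∈ Finset.Iic (Tbig m), alphaF m u * coeff u (monomial T 1))
      = ∑ u ∈ Finset.Iic (Tbig m), (if u = T then alphaF m u else 0) := by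
    refine Finset.sum_congr rfl fun u _ => ?_
    rw [coeff_monomial]
    split <;> simp
  rw [hsum, Finset.sum_ite_eq', if_pos]
  · -- alphaF m T = 1
    have hTj : ∀ j, T j = 3*m := fun j => sumsingle_apply (3*m) j
    have hrep : SuppRep m T := by
      refine ⟨fun _ => 0, fun j => ?_⟩
      rw [hTj j]
      simp
    have hTsum : (∑ j, T j) = 3*m*(m+1) := by
      rw [Finset.sum_congr rfl (fun j _ => hTj j), Finset.sum_const, Finset.card_univ,
        Fintype.card_fin, smul_eq_mul]
      ring
    rw [alphaF, if_pos hrep, hTsum]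
    simp
  · rw [Finset.mem_Iic, Finsupp.le_def]
    intro j
    rw [Tbig_apply, sumsingle_apply]
    nlinarith [m]

theorem part2 (m : ℕ) :
    (∏ i : Fin (m+1), (X i : MvPowerSeries (Fin (m+1)) ℝ)) ^ (3*m)
      ∉ jacobianIdeal (fExample (m+1)) := by
  intro hmem
  rw [jacobianIdeal] at hmem
  obtain ⟨g, hg⟩ := (Ideal.mem_span_range_iff_exists_fun).mp hmem
  have h0 : lamb m (∑ i, g i * mvPderiv i (fExample (m+1)))
      = lamb m ((∏ i : Fin (m+1), (X i : MvPowerSeries (Fin (m+1)) ℝ)) ^ (3*m)) := by rw [hg]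
  rw [lamb_finset_sum, lamb_target] at h0
  have hz : ∀ i : Fin (m+1), i ∈ Finset.univ →
      lamb m (g i * mvPderiv i (fExample (m+1))) = 0 := fun i _ => lamb_gD_zero m i (g i)
  rw [Finset.sum_congr rfl hz, Finset.sum_const_zero] at h0
  exact one_ne_zero h0.symm

end Stmt7Aux

/-- `(x₁⋯xₙ)^{3n−1}` lies in the Jacobian ideal of `fₙ`, while `(x₁⋯xₙ)^{3(n−1)}` does not. -/
theorem stmt_7 (n : ℕ) (hn : 1 ≤ n) :
    (∏ i : Fin n, MvPowerSeries.X i) ^ (3 * n - 1) ∈ jacobianIdeal (fExample n) ∧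
    (∏ i : Fin n, MvPowerSeries.X i) ^ (3 * (n - 1)) ∉ jacobianIdeal (fExample n) := by
  obtain ⟨m, rfl⟩ : ∃ m, n = m + 1 := ⟨n - 1, by omega⟩
  constructor
  · have he : 3 * (m + 1) - 1 = (3 * m + 1) + 1 := by omega
    rw [he, pow_succ]
    exact Ideal.mul_mem_right _ _ (Stmt7Aux.part1 m)
  · have he : 3 * ((m + 1) - 1) = 3 * m := by omega
    rw [he]
    exact Stmt7Aux.part2 m
end

section
/- In the ring ℝ[[x,y]] of formal power series in two variables over ℝ, let J be the ideal generated by 5x⁴+3x²y³, 3x³y²+5y⁵, and y⁶, and let b₀ = x⁵+x³y³+y⁵. Then b₀ ∉ J but b₀² ∈ J; that is, the class of b₀ in ℝ[[x,y]]/J is a nonzero element whose square is zero. -/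
/-- The variable `x` in `ℝ[[x,y]]`. -/
noncomputable def psX : MvPowerSeries (Fin 2) ℝ := MvPowerSeries.X 0

/-- The variable `y` in `ℝ[[x,y]]`. -/
noncomputable def psY : MvPowerSeries (Fin 2) ℝ := MvPowerSeries.X 1

namespace Stmt9Aux

open MvPowerSeries Finsupp

noncomputable def ee (a b : ℕ) : Fin 2 →₀ ℕ := Finsupp.single 0 a + Finsupp.single 1 b

lemma XY_eq (a b : ℕ) : psX ^ a * psY ^ b = MvPowerSeries.monomial (R := ℝ) (ee a b) 1 := by
  rw [psX, psY, MvPowerSeries.X_pow_eq, MvPowerSeries.X_pow_eq,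
    MvPowerSeries.monomial_mul_monomial, one_mul, ee]

lemma ee_le {a b c d : ℕ} : ee a b ≤ ee c d ↔ a ≤ c ∧ b ≤ d := by
  constructor
  · intro h
    have h0 := h 0
    have h1 := h 1
    simp [ee, Finsupp.single_apply] at h0 h1
    exact ⟨h0, h1⟩
  · rintro ⟨h0, h1⟩ s
    fin_cases s <;> simp [ee, Finsupp.single_apply, h0, h1]

lemma ee_eq {a b c d : ℕ} : ee a b = ee c d ↔ a = c ∧ b = d := by
  constructor
  · intro h
    have h0 := DFunLike.congr_fun h 0
    have h1 := DFunLike.congr_fun h 1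
    simp [ee, Finsupp.single_apply] at h0 h1
    exact ⟨h0, h1⟩
  · rintro ⟨rfl, rfl⟩; rfl

lemma coeff_mul_XY (f : MvPowerSeries (Fin 2) ℝ) (a b c d : ℕ) :
    MvPowerSeries.coeff (R := ℝ) (ee c d) (f * (psX ^ a * psY ^ b)) =
      if a ≤ c ∧ b ≤ d then MvPowerSeries.coeff (R := ℝ) (ee c d - ee a b) f else 0 := by
  rw [XY_eq, MvPowerSeries.coeff_mul_monomial]
  simp [ee_le]

lemma coeff_XY (a b c d : ℕ) :
    MvPowerSeries.coeff (R := ℝ) (ee c d) (psX ^ a * psY ^ b) =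
      if a = c ∧ b = d then 1 else 0 := by
  rw [XY_eq, MvPowerSeries.coeff_monomial]
  simp [ee_eq, eq_comm]

end Stmt9Aux

open Stmt9Aux MvPowerSeries

/-- In `ℝ[[x,y]]`, with `J = (5x⁴+3x²y³, 3x³y²+5y⁵, y⁶)` and `b₀ = x⁵+x³y³+y⁵`, we have
`b₀ ∉ J` but `b₀² ∈ J`; equivalently, the class of `b₀` in `ℝ[[x,y]]/J` is a nonzero
element whose square is zero. -/
theorem stmt_9 :
    psX ^ 5 + psX ^ 3 * psY ^ 3 + psY ^ 5 ∉
      Ideal.span ({5 * psX ^ 4 + 3 * psX ^ 2 * psY ^ 3,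
        3 * psX ^ 3 * psY ^ 2 + 5 * psY ^ 5, psY ^ 6} : Set (MvPowerSeries (Fin 2) ℝ)) ∧
    (psX ^ 5 + psX ^ 3 * psY ^ 3 + psY ^ 5) ^ 2 ∈
      Ideal.span ({5 * psX ^ 4 + 3 * psX ^ 2 * psY ^ 3,
        3 * psX ^ 3 * psY ^ 2 + 5 * psY ^ 5, psY ^ 6} : Set (MvPowerSeries (Fin 2) ℝ)) := by
  constructor
  · intro hmem
    rw [Ideal.mem_span_insert] at hmem
    obtain ⟨p, w, hw, hrep⟩ := hmem
    rw [Ideal.mem_span_insert] at hw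
    obtain ⟨q, w', hw', hrep'⟩ := hw
    rw [Ideal.mem_span_singleton'] at hw'
    obtain ⟨r, hr⟩ := hw'
    subst hrep'
    rw [← hr] at hrep
    have hform : p * (5 * psX ^ 4 + 3 * psX ^ 2 * psY ^ 3) +
        (q * (3 * psX ^ 3 * psY ^ 2 + 5 * psY ^ 5) + r * psY ^ 6) =
        (5 * p) * (psX ^ 4 * psY ^ 0) + (3 * p) * (psX ^ 2 * psY ^ 3) +
        (3 * q) * (psX ^ 3 * psY ^ 2) + (5 * q) * (psX ^ 0 * psY ^ 5) +
        r * (psX ^ 0 * psY ^ 6) := by ring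
    have hb : psX ^ 5 + psX ^ 3 * psY ^ 3 + psY ^ 5 =
        psX ^ 5 * psY ^ 0 + psX ^ 3 * psY ^ 3 + psX ^ 0 * psY ^ 5 := by ring
    rw [hb, hform] at hrep
    have h1 := congrArg (MvPowerSeries.coeff (R := ℝ) (ee 3 2)) hrep
    have h2 := congrArg (MvPowerSeries.coeff (R := ℝ) (ee 0 5)) hrep
    simp only [map_add, coeff_mul_XY, coeff_XY] at h1 h2
    norm_num at h1 h2
    rw [show ((MvPowerSeries.constantCoeff (σ := Fin 2) (R := ℝ)) 3) = (3 : ℝ) from map_ofNat _ 3] at h1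
    rw [show ((MvPowerSeries.constantCoeff (σ := Fin 2) (R := ℝ)) 5) = (5 : ℝ) from map_ofNat _ 5] at h2
    rcases h1 with h1 | h1
    · norm_num at h1
    · rw [h1] at h2
      norm_num at h2
  · set J := Ideal.span ({5 * psX ^ 4 + 3 * psX ^ 2 * psY ^ 3,
        3 * psX ^ 3 * psY ^ 2 + 5 * psY ^ 5, psY ^ 6} : Set (MvPowerSeries (Fin 2) ℝ)) with hJ
    have hg1 : 5 * psX ^ 4 + 3 * psX ^ 2 * psY ^ 3 ∈ J := Ideal.subset_span (by simp)
    have hg2 : 3 * psX ^ 3 * psY ^ 2 + 5 * psY ^ 5 ∈ J := Ideal.subset_span (by simp)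
    have hg3 : psY ^ 6 ∈ J := Ideal.subset_span (by simp)
    have h75 : (75 : MvPowerSeries (Fin 2) ℝ) * (psX ^ 5 + psX ^ 3 * psY ^ 3 + psY ^ 5) ^ 2 =
        (15 * psX ^ 6 + 21 * psX ^ 4 * psY ^ 3) * (5 * psX ^ 4 + 3 * psX ^ 2 * psY ^ 3) +
        (50 * psX ^ 2 * psY ^ 3) * (3 * psX ^ 3 * psY ^ 2 + 5 * psY ^ 5) +
        (12 * psX ^ 6 + 150 * psX ^ 3 * psY ^ 2 - 250 * psX ^ 2 * psY ^ 2 + 75 * psY ^ 4) *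
          psY ^ 6 := by ring
    have hmem75 : (75 : MvPowerSeries (Fin 2) ℝ) *
        (psX ^ 5 + psX ^ 3 * psY ^ 3 + psY ^ 5) ^ 2 ∈ J := by
      rw [h75]
      exact Ideal.add_mem _ (Ideal.add_mem _ (Ideal.mul_mem_left _ _ hg1)
        (Ideal.mul_mem_left _ _ hg2)) (Ideal.mul_mem_left _ _ hg3)
    have hc : (MvPowerSeries.C (σ := Fin 2) (R := ℝ)) (75⁻¹ : ℝ) * (75 : MvPowerSeries (Fin 2) ℝ) = 1 := by
      rw [show (75 : MvPowerSeries (Fin 2) ℝ) = (MvPowerSeries.C (σ := Fin 2) (R := ℝ)) 75 from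
        (map_ofNat _ 75).symm, ← map_mul]
      norm_num
    have := Ideal.mul_mem_left J ((MvPowerSeries.C (σ := Fin 2) (R := ℝ)) (75⁻¹ : ℝ)) hmem75
    rwa [← mul_assoc, hc, one_mul] at this
end

section
/- In the ring ℝ[[x,y]] of formal power series in two variables over ℝ, let I be the ideal generated by 5x⁴+2xy² and 2x²y+5y⁴ (the two partial derivatives of f = x⁵+x²y²+y⁵), and let A = ℝ[[x,y]]/I. Then the class [f] of f = x⁵+x²y²+y⁵ in A is nonzero, and the ideal of A generated by [f] consists entirely of real scalar multiples of [f]; that is, for every u ∈ A there exists c ∈ ℝ with u·[f] = c·[f]. -/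
/-- The ideal `I = (5x⁴+2xy², 2x²y+5y⁴)` of `ℝ[[x,y]]` generated by the two partial
derivatives of `f = x⁵+x²y²+y⁵`. -/
noncomputable def idealI : Ideal (MvPowerSeries (Fin 2) ℝ) :=
  Ideal.span {5 * psX ^ 4 + 2 * psX * psY ^ 2, 2 * psX ^ 2 * psY + 5 * psY ^ 4}

open MvPowerSeries Finsupp

/-- `x·f ∈ I`, via the certificate
`(20 - 125xy)·x·f = (4x² - 5y³ - 25x³y)·g₁ + (6xy - 25x²y²)·g₂`. -/
lemma aux_memx : psX * (psX ^ 5 + psX ^ 2 * psY ^ 2 + psY ^ 5) ∈ idealI := by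
  have hu : IsUnit (20 - 125 * psX * psY : MvPowerSeries (Fin 2) ℝ) := by
    rw [isUnit_iff_constantCoeff]
    simp [psX, psY, map_ofNat]
  rw [← Ideal.unit_mul_mem_iff_mem _ hu, idealI, Ideal.mem_span_pair]
  refine ⟨4*psX^2 - 5*psY^3 - 25*psX^3*psY, 6*psX*psY - 25*psX^2*psY^2, ?_⟩
  ring

/-- `y·f ∈ I`. -/
lemma aux_memy : psY * (psX ^ 5 + psX ^ 2 * psY ^ 2 + psY ^ 5) ∈ idealI := by
  have hu : IsUnit (20 - 125 * psX * psY : MvPowerSeries (Fin 2) ℝ) := by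
    rw [isUnit_iff_constantCoeff]
    simp [psX, psY, map_ofNat]
  rw [← Ideal.unit_mul_mem_iff_mem _ hu, idealI, Ideal.mem_span_pair]
  refine ⟨6*psX*psY - 25*psX^2*psY^2, 4*psY^2 - 5*psX^3 - 25*psX*psY^3, ?_⟩
  ring

/-- Any power series with zero constant term is of the form `x·p + y·q`. -/
lemma aux_split (h : MvPowerSeries (Fin 2) ℝ)
    (h0 : MvPowerSeries.constantCoeff h = 0) :
    ∃ p q, h = MvPowerSeries.X 0 * p + MvPowerSeries.X 1 * q := by
  set h' : MvPowerSeries (Fin 2) ℝ := fun m => if m 0 = 0 then coeff m h else 0 with hh'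
  have hc : ∀ m, coeff m h' = if m 0 = 0 then coeff m h else 0 := fun m => rfl
  have d1 : (X 0 : MvPowerSeries (Fin 2) ℝ) ∣ (h - h') := by
    rw [X_dvd_iff]
    intro m hm
    simp [map_sub, hc, hm]
  have d2 : (X 1 : MvPowerSeries (Fin 2) ℝ) ∣ h' := by
    rw [X_dvd_iff]
    intro m hm
    rw [hc]
    split_ifs with h00
    · have : m = 0 := by
        ext i
        fin_cases i <;> simp [h00, hm]
      rw [this]
      exact h0
    · rfl
  obtain ⟨p, hp⟩ := d1
  obtain ⟨q, hq⟩ := d2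
  exact ⟨p, q, by rw [← hp, ← hq]; ring⟩

/-- Monomial forms of the two generators and of `f`. -/
lemma aux_mono_form :
    (5 * psX ^ 4 + 2 * psX * psY ^ 2 = monomial (single 0 4) (5:ℝ)
        + monomial (single 0 1 + single 1 2) (2:ℝ)) ∧
    (2 * psX ^ 2 * psY + 5 * psY ^ 4 = monomial (single 0 2 + single 1 1) (2:ℝ)
        + monomial (single 1 4) (5:ℝ)) ∧
    (psX ^ 5 + psX ^ 2 * psY ^ 2 + psY ^ 5 = monomial (single 0 5) (1:ℝ)
        + monomial (single 0 2 + single 1 2) (1:ℝ) + monomial (single 1 5) (1:ℝ)) := by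
  have h5 : (5 : MvPowerSeries (Fin 2) ℝ) = C 5 := by simp [map_ofNat]
  have h2 : (2 : MvPowerSeries (Fin 2) ℝ) = C 2 := by simp [map_ofNat]
  have hC : ∀ r : ℝ, (C r : MvPowerSeries (Fin 2) ℝ) = monomial 0 r := fun r => rfl
  refine ⟨?_, ?_, ?_⟩ <;>
  · simp only [h5, h2, psX, psY, X, hC, monomial_mul_monomial, pow_succ, pow_zero, one_mul,
      mul_one, ← Finsupp.single_add, zero_add]
    try norm_num

/-- `f ∉ I`: the functional `λ = coeff(5,0) + coeff(0,5) - (5/2)·coeff(2,2)` kills `I`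
but `λ(f) = -1/2 ≠ 0`. -/
lemma aux_notmem : psX ^ 5 + psX ^ 2 * psY ^ 2 + psY ^ 5 ∉ idealI := by
  rw [idealI, Ideal.mem_span_pair]
  rintro ⟨a, b, hab⟩
  obtain ⟨hg1, hg2, hf⟩ := aux_mono_form
  rw [hg1, hg2, hf] at hab
  have h1 := congrArg (coeff (single 0 5)) hab
  have h2 := congrArg (coeff (single 1 5)) hab
  have h3 := congrArg (coeff (single 0 2 + single 1 2)) hab
  simp only [map_add, mul_add, coeff_mul_monomial, coeff_monomial, Finsupp.le_def,
    Finsupp.single_apply, Fin.forall_fin_two, Finsupp.add_apply] at h1 h2 h3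
  norm_num at h1 h2 h3
  have E1 : ((single 0 5 : Fin 2 →₀ ℕ) - single 0 4) = single 0 1 := by
    ext i; fin_cases i <;> simp [Finsupp.tsub_apply, Finsupp.single_apply]
  have E2 : ((single 1 5 : Fin 2 →₀ ℕ) - single 1 4) = single 1 1 := by
    ext i; fin_cases i <;> simp [Finsupp.tsub_apply, Finsupp.single_apply]
  have E3 : (((single 0 2 : Fin 2 →₀ ℕ) + single 1 2) - (single 0 1 + single 1 2)) = single 0 1 := by
    ext i; fin_cases i <;> simp [Finsupp.tsub_apply, Finsupp.single_apply, Finsupp.add_apply]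
  have E4 : (((single 0 2 : Fin 2 →₀ ℕ) + single 1 2) - (single 0 2 + single 1 1)) = single 1 1 := by
    ext i; fin_cases i <;> simp [Finsupp.tsub_apply, Finsupp.single_apply, Finsupp.add_apply]
  rw [E1] at h1
  rw [E2] at h2
  rw [E3, E4] at h3
  simp only [Finsupp.ext_iff, Fin.forall_fin_two, Finsupp.single_apply, Finsupp.add_apply]
    at h1 h2 h3
  norm_num at h1 h2 h3
  linarith

/-- In `A = ℝ[[x,y]]/(5x⁴+2xy², 2x²y+5y⁴)`, the class of `f = x⁵+x²y²+y⁵` is nonzero, and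
the ideal of `A` it generates consists entirely of real scalar multiples of it. -/
theorem stmt_10 :
    Ideal.Quotient.mk idealI (psX ^ 5 + psX ^ 2 * psY ^ 2 + psY ^ 5) ≠ 0 ∧
    ∀ u : MvPowerSeries (Fin 2) ℝ ⧸ idealI, ∃ c : ℝ,
      u * Ideal.Quotient.mk idealI (psX ^ 5 + psX ^ 2 * psY ^ 2 + psY ^ 5) =
        c • Ideal.Quotient.mk idealI (psX ^ 5 + psX ^ 2 * psY ^ 2 + psY ^ 5) := by
  constructor
  · intro h
    exact aux_notmem (Ideal.Quotient.eq_zero_iff_mem.mp h)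
  · intro u
    obtain ⟨g, rfl⟩ := Ideal.Quotient.mk_surjective u
    set c := MvPowerSeries.constantCoeff g with hc
    refine ⟨c, ?_⟩
    have halg : c • Ideal.Quotient.mk idealI (psX ^ 5 + psX ^ 2 * psY ^ 2 + psY ^ 5) =
        Ideal.Quotient.mk idealI (C c * (psX ^ 5 + psX ^ 2 * psY ^ 2 + psY ^ 5)) := by
      rw [← MvPowerSeries.smul_eq_C_mul]
      rfl
    rw [halg, ← map_mul, Ideal.Quotient.mk_eq_mk_iff_sub_mem]
    have hsub : g * (psX ^ 5 + psX ^ 2 * psY ^ 2 + psY ^ 5) -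
        C c * (psX ^ 5 + psX ^ 2 * psY ^ 2 + psY ^ 5) =
        (g - C c) * (psX ^ 5 + psX ^ 2 * psY ^ 2 + psY ^ 5) := by ring
    rw [hsub]
    obtain ⟨p, q, hpq⟩ := aux_split (g - C c) (by simp [map_sub, ← hc])
    rw [hpq]
    have : (MvPowerSeries.X 0 * p + MvPowerSeries.X 1 * q) *
        (psX ^ 5 + psX ^ 2 * psY ^ 2 + psY ^ 5) =
        p * (psX * (psX ^ 5 + psX ^ 2 * psY ^ 2 + psY ^ 5)) +
        q * (psY * (psX ^ 5 + psX ^ 2 * psY ^ 2 + psY ^ 5)) := by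
      rw [psX, psY]; ring
    rw [this]
    exact Ideal.add_mem _ (Ideal.mul_mem_left _ _ aux_memx) (Ideal.mul_mem_left _ _ aux_memy)
end

section
/- In the ring ℝ[[x,y]] of formal power series in two variables over ℝ, let I be the ideal generated by 5x⁴+2xy² and 2x²y+5y⁴. Then the quotient ring A = ℝ[[x,y]]/I has dimension 11 as a real vector space. -/
namespace Dim11
open MvPowerSeries Finsupp

noncomputable def G1 : MvPowerSeries (Fin 2) ℝ := 5 * psX ^ 4 + 2 * psX * psY ^ 2
noncomputable def G2 : MvPowerSeries (Fin 2) ℝ := 2 * psX ^ 2 * psY + 5 * psY ^ 4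

lemma idealI_eq : idealI = Ideal.span {G1, G2} := rfl

lemma hG1 : G1 ∈ idealI := Ideal.subset_span (by left; rfl)
lemma hG2 : G2 ∈ idealI := Ideal.subset_span (by right; rfl)

lemma unit_u : IsUnit (20 - 125 * psX * psY) := by
  rw [MvPowerSeries.isUnit_iff_constantCoeff]
  have h0 : constantCoeff (20 - 125 * psX * psY) = 20 := by
    rw [map_sub, map_ofNat, map_mul, map_mul, map_ofNat]
    simp [psX, psY]
  rw [h0]
  norm_num

lemma hy6 : psY ^ 6 ∈ idealI := by
  have key : psY ^ 6 * (20 - 125 * psX * psY)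
      = (-4 * psX * psY) * G1 + (10 * psX ^ 3 + 4 * psY ^ 2 - 25 * psX * psY ^ 3) * G2 := by
    unfold G1 G2; ring
  obtain ⟨u, hu⟩ := unit_u
  have huv : psY ^ 6 = ((u⁻¹ : _) : MvPowerSeries (Fin 2) ℝ) *
      ((-4 * psX * psY) * G1 + (10 * psX ^ 3 + 4 * psY ^ 2 - 25 * psX * psY ^ 3) * G2) := by
    rw [← key, ← hu, ← mul_assoc, mul_comm ((u⁻¹ : _) : MvPowerSeries (Fin 2) ℝ) _,
      mul_assoc, Units.inv_mul, mul_one]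
  rw [huv]
  exact Ideal.mul_mem_left _ _ (Ideal.add_mem _ (Ideal.mul_mem_left _ _ hG1) (Ideal.mul_mem_left _ _ hG2))

lemma hx6 : psX ^ 6 ∈ idealI := by
  have key : psX ^ 6 * (20 - 125 * psX * psY)
      = (10 * psY ^ 3 + 4 * psX ^ 2 - 25 * psX ^ 3 * psY) * G1 + (-4 * psX * psY) * G2 := by
    unfold G1 G2; ring
  obtain ⟨u, hu⟩ := unit_u
  have huv : psX ^ 6 = ((u⁻¹ : _) : MvPowerSeries (Fin 2) ℝ) *
      ((10 * psY ^ 3 + 4 * psX ^ 2 - 25 * psX ^ 3 * psY) * G1 + (-4 * psX * psY) * G2) := by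
    rw [← key, ← hu, ← mul_assoc, mul_comm ((u⁻¹ : _) : MvPowerSeries (Fin 2) ℝ) _,
      mul_assoc, Units.inv_mul, mul_one]
  rw [huv]
  exact Ideal.mul_mem_left _ _ (Ideal.add_mem _ (Ideal.mul_mem_left _ _ hG1) (Ideal.mul_mem_left _ _ hG2))


noncomputable abbrev Aq := MvPowerSeries (Fin 2) ℝ ⧸ idealI

noncomputable def mkq : MvPowerSeries (Fin 2) ℝ →ₐ[ℝ] Aq := Ideal.Quotient.mkₐ ℝ idealI

noncomputable def XX : Aq := mkq psX
noncomputable def YY : Aq := mkq psY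

lemma r1 : 5 * XX ^ 4 + 2 * XX * YY ^ 2 = 0 := by
  have := Ideal.Quotient.eq_zero_iff_mem.mpr hG1
  have h2 : mkq G1 = 0 := this
  rw [G1] at h2
  simp only [map_add, map_mul, map_pow, map_ofNat] at h2
  exact h2

lemma r2 : 2 * XX ^ 2 * YY + 5 * YY ^ 4 = 0 := by
  have := Ideal.Quotient.eq_zero_iff_mem.mpr hG2
  have h2 : mkq G2 = 0 := this
  rw [G2] at h2
  simp only [map_add, map_mul, map_pow, map_ofNat] at h2
  exact h2

lemma rx6 : XX ^ 6 = 0 := by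
  have := Ideal.Quotient.eq_zero_iff_mem.mpr hx6
  have h2 : mkq (psX ^ 6) = 0 := this
  rw [map_pow] at h2
  exact h2

lemma ry6 : YY ^ 6 = 0 := by
  have := Ideal.Quotient.eq_zero_iff_mem.mpr hy6
  have h2 : mkq (psY ^ 6) = 0 := this
  rw [map_pow] at h2
  exact h2


lemma natsmul (n : ℕ) (z : Aq) : ((n : ℝ)) • z = (n : Aq) * z := by
  rw [Nat.cast_smul_eq_nsmul, nsmul_eq_mul]

lemma cancelc (c : ℝ) (hc : c ≠ 0) {z : Aq} (h : c • z = 0) : z = 0 := by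
  have h2 := inv_smul_smul₀ hc z
  rw [h, smul_zero] at h2
  exact h2.symm

lemma cancel2 {z : Aq} (h : 2 * z = 0) : z = 0 := by
  apply cancelc 2 two_ne_zero
  have h2 := natsmul 2 z
  norm_num at h2
  rw [h2]
  exact h

lemma cancel5 {z w : Aq} (h : 5 * z = 5 * w) : z = w := by
  have h5 : (5 : Aq) * (z - w) = 0 := by linear_combination h
  have h2 := natsmul 5 (z - w)
  norm_num at h2
  rw [← h2] at h5
  have := cancelc 5 (by norm_num) h5
  exact sub_eq_zero.mp this

lemma z24 : XX ^ 2 * YY ^ 4 = 0 := by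
  apply cancel2; linear_combination YY ^ 3 * r2 - 5 * YY * ry6

lemma z41 : XX ^ 4 * YY = 0 := by
  apply cancel2; linear_combination XX ^ 2 * r2 - 5 * z24

lemma z13 : XX * YY ^ 3 = 0 := by
  apply cancel2; linear_combination YY * r1 - 5 * z41

lemma z42 : XX ^ 4 * YY ^ 2 = 0 := by
  apply cancel2; linear_combination XX ^ 3 * r1 - 5 * XX * rx6

lemma z14 : XX * YY ^ 4 = 0 := by
  apply cancel2; linear_combination YY ^ 2 * r1 - 5 * z42

lemma z31 : XX ^ 3 * YY = 0 := by
  apply cancel2; linear_combination XX * r2 - 5 * z14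

lemma x5y5 : XX ^ 5 = YY ^ 5 := by
  apply cancel5; linear_combination XX * r1 - YY * r2

noncomputable def vb : Fin 11 → Aq :=
  ![1, XX, XX ^ 2, XX ^ 3, XX ^ 4, YY, YY ^ 2, YY ^ 3, YY ^ 4, YY ^ 5, XX * YY]

noncomputable def S : Submodule ℝ Aq := Submodule.span ℝ (Set.range vb)

lemma hb1 : (1 : Aq) ∈ S := Submodule.subset_span ⟨0, rfl⟩
lemma hbX : XX ∈ S := Submodule.subset_span ⟨1, rfl⟩
lemma hbX2 : XX ^ 2 ∈ S := Submodule.subset_span ⟨2, rfl⟩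
lemma hbX3 : XX ^ 3 ∈ S := Submodule.subset_span ⟨3, rfl⟩
lemma hbX4 : XX ^ 4 ∈ S := Submodule.subset_span ⟨4, rfl⟩
lemma hbY : YY ∈ S := Submodule.subset_span ⟨5, rfl⟩
lemma hbY2 : YY ^ 2 ∈ S := Submodule.subset_span ⟨6, rfl⟩
lemma hbY3 : YY ^ 3 ∈ S := Submodule.subset_span ⟨7, rfl⟩
lemma hbY4 : YY ^ 4 ∈ S := Submodule.subset_span ⟨8, rfl⟩
lemma hbY5 : YY ^ 5 ∈ S := Submodule.subset_span ⟨9, rfl⟩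
lemma hbXY : XX * YY ∈ S := Submodule.subset_span ⟨10, rfl⟩

lemma intmul_mem (n : ℤ) {w : Aq} (hw : w ∈ S) : (n : Aq) * w ∈ S := by
  have h : ((n : ℝ)) • w = (n : Aq) * w := by rw [Int.cast_smul_eq_zsmul, zsmul_eq_mul]
  rw [← h]
  exact S.smul_mem _ hw

lemma mem_of_mul_eq {z w : Aq} (h : 2 * z = w) (hw : w ∈ S) : z ∈ S := by
  have h2 : ((2:ℝ)) • z = w := by
    have hn := natsmul 2 z
    norm_num at hn
    rw [hn]
    exact h
  have hz : z = (2:ℝ)⁻¹ • w := by rw [← h2, inv_smul_smul₀ two_ne_zero]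
  rw [hz]
  exact S.smul_mem _ hw

lemma mono_mem (a b : ℕ) (ha : a < 6) (hb : b < 6) : XX ^ a * YY ^ b ∈ S := by
  -- zero cases helper
  have hz : ∀ z : Aq, z = 0 → z ∈ S := fun z h => h ▸ S.zero_mem
  interval_cases a <;> interval_cases b
  · simpa using hb1
  · simpa using hbY
  · simpa using hbY2
  · simpa using hbY3
  · simpa using hbY4
  · simpa using hbY5
  · simpa using hbX
  · simpa using hbXY
  · -- (1,2)
    refine mem_of_mul_eq ?_ (intmul_mem (-5) hbX4)
    push_cast; linear_combination r1
  · exact hz _ (by linear_combination z13)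
  · exact hz _ (by linear_combination YY * z13)
  · exact hz _ (by linear_combination YY ^ 2 * z13)
  · simpa using hbX2
  · -- (2,1)
    refine mem_of_mul_eq ?_ (intmul_mem (-5) hbY4)
    push_cast; linear_combination r2
  · -- (2,2)
    refine mem_of_mul_eq ?_ (intmul_mem (-5) hbY5)
    push_cast; linear_combination XX * r1 - 5 * x5y5
  · exact hz _ (by linear_combination XX * z13)
  · exact hz _ (by linear_combination XX * YY * z13)
  · exact hz _ (by linear_combination XX * YY ^ 2 * z13)
  · simpa using hbX3
  · exact hz _ (by linear_combination z31)
  · exact hz _ (by linear_combination YY * z31)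
  · exact hz _ (by linear_combination XX ^ 2 * z13)
  · exact hz _ (by linear_combination XX ^ 2 * YY * z13)
  · exact hz _ (by linear_combination XX ^ 2 * YY ^ 2 * z13)
  · simpa using hbX4
  · exact hz _ (by linear_combination XX * z31)
  · exact hz _ (by linear_combination XX * YY * z31)
  · exact hz _ (by linear_combination XX ^ 3 * z13)
  · exact hz _ (by linear_combination XX ^ 3 * YY * z13)
  · exact hz _ (by linear_combination XX ^ 3 * YY ^ 2 * z13)
  · -- (5,0)
    rw [pow_zero, mul_one, x5y5]; exact hbY5
  · exact hz _ (by linear_combination XX ^ 2 * z31)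
  · exact hz _ (by linear_combination XX ^ 2 * YY * z31)
  · exact hz _ (by linear_combination XX ^ 4 * z13)
  · exact hz _ (by linear_combination XX ^ 4 * YY * z13)
  · exact hz _ (by linear_combination XX ^ 4 * YY ^ 2 * z13)


noncomputable def fd (a b : ℕ) : Fin 2 →₀ ℕ := Finsupp.single 0 a + Finsupp.single 1 b

lemma fd_apply0 (a b : ℕ) : fd a b 0 = a := by simp [fd]
lemma fd_apply1 (a b : ℕ) : fd a b 1 = b := by simp [fd, Finsupp.single_apply]

lemma eq_fd (m : Fin 2 →₀ ℕ) : m = fd (m 0) (m 1) := by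
  ext i
  fin_cases i
  · simp [fd_apply0]
  · simp [fd_apply1]

lemma mono_eq (a b : ℕ) : psX ^ a * psY ^ b = MvPowerSeries.monomial (fd a b) 1 := by
  rw [psX, psY, MvPowerSeries.X_pow_eq, MvPowerSeries.X_pow_eq,
    MvPowerSeries.monomial_mul_monomial, one_mul, fd]

lemma span_top : ∀ z : Aq, z ∈ S := by
  intro z
  obtain ⟨f, rfl⟩ := Ideal.Quotient.mkₐ_surjective ℝ (I := idealI) z
  set F1 : MvPowerSeries (Fin 2) ℝ := fun m => if 6 ≤ m 0 then coeff m f else 0 with hF1def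
  set F2 : MvPowerSeries (Fin 2) ℝ :=
    fun m => if m 0 < 6 ∧ 6 ≤ m 1 then coeff m f else 0 with hF2def
  have hF1 : psX ^ 6 ∣ F1 := by
    rw [psX, MvPowerSeries.X_pow_dvd_iff]
    intro m hm
    show (if 6 ≤ m 0 then coeff m f else 0) = 0
    rw [if_neg (by omega)]
  have hF2 : psY ^ 6 ∣ F2 := by
    rw [psY, MvPowerSeries.X_pow_dvd_iff]
    intro m hm
    show (if m 0 < 6 ∧ 6 ≤ m 1 then coeff m f else 0) = 0
    rw [if_neg (by omega)]
  set P : MvPowerSeries (Fin 2) ℝ :=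
    ∑ p ∈ Finset.range 6 ×ˢ Finset.range 6,
      MvPowerSeries.monomial (fd p.1 p.2) (coeff (fd p.1 p.2) f) with hPdef
  have hsplit : f = P + F1 + F2 := by
    classical
    ext m
    rw [map_add, map_add]
    have hP : coeff m P = if m 0 < 6 ∧ m 1 < 6 then coeff m f else 0 := by
      rw [hPdef, map_sum]
      simp only [MvPowerSeries.coeff_monomial]
      by_cases h : m 0 < 6 ∧ m 1 < 6
      · rw [if_pos h]
        rw [Finset.sum_eq_single_of_mem (m 0, m 1)
          (by simp [Finset.mem_product, h.1, h.2])]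
        · show (if m = fd (m 0) (m 1) then coeff (fd (m 0) (m 1)) f else 0) = coeff m f
          rw [if_pos (eq_fd m), ← eq_fd m]
        · intro p _ hp
          rw [if_neg]
          intro he
          apply hp
          have h0 := fd_apply0 p.1 p.2
          have h1 := fd_apply1 p.1 p.2
          rw [← he] at h0 h1
          exact Prod.ext h0.symm h1.symm
      · rw [if_neg h]
        apply Finset.sum_eq_zero
        intro p hp
        rw [if_neg]
        intro he
        rw [he] at h
        simp only [fd_apply0, fd_apply1] at h
        simp only [Finset.mem_product, Finset.mem_range] at hp
        exact h ⟨hp.1, hp.2⟩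
    have hc1 : coeff m F1 = if 6 ≤ m 0 then coeff m f else 0 := rfl
    have hc2 : coeff m F2 = if m 0 < 6 ∧ 6 ≤ m 1 then coeff m f else 0 := rfl
    rw [hP, hc1, hc2]
    by_cases h0 : 6 ≤ m 0 <;> by_cases h1 : 6 ≤ m 1
    · rw [if_neg (by omega : ¬(m 0 < 6 ∧ m 1 < 6)), if_pos h0,
        if_neg (by omega : ¬(m 0 < 6 ∧ 6 ≤ m 1))]; ring
    · rw [if_neg (by omega : ¬(m 0 < 6 ∧ m 1 < 6)), if_pos h0,
        if_neg (by omega : ¬(m 0 < 6 ∧ 6 ≤ m 1))]; ring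
    · rw [if_neg (by omega : ¬(m 0 < 6 ∧ m 1 < 6)), if_neg h0,
        if_pos (⟨by omega, h1⟩ : m 0 < 6 ∧ 6 ≤ m 1)]; ring
    · rw [if_pos (⟨by omega, by omega⟩ : m 0 < 6 ∧ m 1 < 6), if_neg h0,
        if_neg (by omega : ¬(m 0 < 6 ∧ 6 ≤ m 1))]; ring
  show mkq f ∈ S
  obtain ⟨g1', hg1'⟩ := hF1
  obtain ⟨g2', hg2'⟩ := hF2
  have himg : mkq f = mkq P := by
    rw [hsplit, map_add, map_add, hg1', hg2', map_mul, map_mul, map_pow, map_pow]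
    have hx : mkq psX ^ 6 = 0 := rx6
    have hy : mkq psY ^ 6 = 0 := ry6
    rw [hx, hy, zero_mul, zero_mul, add_zero, add_zero]
  rw [himg, hPdef, map_sum]
  apply Submodule.sum_mem
  intro p hp
  simp only [Finset.mem_product, Finset.mem_range] at hp
  have hm : MvPowerSeries.monomial (fd p.1 p.2) (coeff (fd p.1 p.2) f)
      = (coeff (fd p.1 p.2) f) • (psX ^ p.1 * psY ^ p.2) := by
    rw [mono_eq, ← map_smul, smul_eq_mul, mul_one]
  rw [hm, map_smul]
  apply S.smul_mem
  have := mono_mem p.1 p.2 hp.1 hp.2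
  rw [map_mul, map_pow, map_pow]
  exact this


lemma fd_le {a b c d : ℕ} : fd a b ≤ fd c d ↔ a ≤ c ∧ b ≤ d := by
  rw [Finsupp.le_def, Fin.forall_fin_two, fd_apply0, fd_apply0, fd_apply1, fd_apply1]

lemma fd_sub {a b c d : ℕ} : fd a b - fd c d = fd (a - c) (b - d) := by
  ext i
  fin_cases i
  · show (fd a b - fd c d) 0 = fd (a-c) (b-d) 0
    rw [Finsupp.tsub_apply, fd_apply0, fd_apply0, fd_apply0]
  · show (fd a b - fd c d) 1 = fd (a-c) (b-d) 1
    rw [Finsupp.tsub_apply, fd_apply1, fd_apply1, fd_apply1]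

lemma fd_eq_iff {a b c d : ℕ} : fd a b = fd c d ↔ a = c ∧ b = d := by
  constructor
  · intro h
    constructor
    · rw [← fd_apply0 a b, h, fd_apply0]
    · rw [← fd_apply1 a b, h, fd_apply1]
  · intro ⟨h0, h1⟩; rw [h0, h1]

lemma coeff_mono (a b c d : ℕ) :
    coeff (fd a b) (psX ^ c * psY ^ d) = if a = c ∧ b = d then 1 else 0 := by
  rw [mono_eq, MvPowerSeries.coeff_monomial]
  by_cases h : a = c ∧ b = d
  · rw [if_pos (fd_eq_iff.mpr h), if_pos h]
  · rw [if_neg (fun he => h (fd_eq_iff.mp he)), if_neg h]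

lemma G1_eq : G1 = MvPowerSeries.monomial (fd 4 0) 5 + MvPowerSeries.monomial (fd 1 2) 2 := by
  have h5 : (5 : MvPowerSeries (Fin 2) ℝ) = MvPowerSeries.monomial 0 5 := by
    rw [MvPowerSeries.monomial_zero_eq_C_apply]
    exact (map_ofNat (MvPowerSeries.C (σ := Fin 2) (R := ℝ)) 5).symm
  have h2 : (2 : MvPowerSeries (Fin 2) ℝ) = MvPowerSeries.monomial 0 2 := by
    rw [MvPowerSeries.monomial_zero_eq_C_apply]
    exact (map_ofNat (MvPowerSeries.C (σ := Fin 2) (R := ℝ)) 2).symm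
  have ha : (5 : MvPowerSeries (Fin 2) ℝ) * psX ^ 4 = MvPowerSeries.monomial (fd 4 0) 5 := by
    rw [show psX ^ 4 = psX ^ 4 * psY ^ 0 by ring, mono_eq 4 0, h5,
      MvPowerSeries.monomial_mul_monomial, zero_add, mul_one]
  have hb : (2 : MvPowerSeries (Fin 2) ℝ) * psX * psY ^ 2
      = MvPowerSeries.monomial (fd 1 2) 2 := by
    rw [mul_assoc, show psX * psY ^ 2 = psX ^ 1 * psY ^ 2 by ring, mono_eq 1 2, h2,
      MvPowerSeries.monomial_mul_monomial, zero_add, mul_one]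
  rw [G1, ha, hb]

lemma G2_eq : G2 = MvPowerSeries.monomial (fd 2 1) 2 + MvPowerSeries.monomial (fd 0 4) 5 := by
  have h5 : (5 : MvPowerSeries (Fin 2) ℝ) = MvPowerSeries.monomial 0 5 := by
    rw [MvPowerSeries.monomial_zero_eq_C_apply]
    exact (map_ofNat (MvPowerSeries.C (σ := Fin 2) (R := ℝ)) 5).symm
  have h2 : (2 : MvPowerSeries (Fin 2) ℝ) = MvPowerSeries.monomial 0 2 := by
    rw [MvPowerSeries.monomial_zero_eq_C_apply]
    exact (map_ofNat (MvPowerSeries.C (σ := Fin 2) (R := ℝ)) 2).symm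
  have ha : (2 : MvPowerSeries (Fin 2) ℝ) * psX ^ 2 * psY
      = MvPowerSeries.monomial (fd 2 1) 2 := by
    rw [mul_assoc, show psX ^ 2 * psY = psX ^ 2 * psY ^ 1 by ring, mono_eq 2 1, h2,
      MvPowerSeries.monomial_mul_monomial, zero_add, mul_one]
  have hb : (5 : MvPowerSeries (Fin 2) ℝ) * psY ^ 4 = MvPowerSeries.monomial (fd 0 4) 5 := by
    rw [show psY ^ 4 = psX ^ 0 * psY ^ 4 by ring, mono_eq 0 4, h5,
      MvPowerSeries.monomial_mul_monomial, zero_add, mul_one]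
  rw [G2, ha, hb]

lemma coeff_G1 (p : MvPowerSeries (Fin 2) ℝ) (d : Fin 2 →₀ ℕ) :
    coeff d (p * G1) =
      (if fd 4 0 ≤ d then coeff (d - fd 4 0) p * 5 else 0) +
      (if fd 1 2 ≤ d then coeff (d - fd 1 2) p * 2 else 0) := by
  rw [G1_eq, mul_add, map_add, MvPowerSeries.coeff_mul_monomial,
    MvPowerSeries.coeff_mul_monomial]

lemma coeff_G2 (q : MvPowerSeries (Fin 2) ℝ) (d : Fin 2 →₀ ℕ) :
    coeff d (q * G2) =
      (if fd 2 1 ≤ d then coeff (d - fd 2 1) q * 2 else 0) +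
      (if fd 0 4 ≤ d then coeff (d - fd 0 4) q * 5 else 0) := by
  rw [G2_eq, mul_add, map_add, MvPowerSeries.coeff_mul_monomial,
    MvPowerSeries.coeff_mul_monomial]

def pa : Fin 11 → ℕ := ![0,1,2,3,4,0,0,0,0,0,1]
def pb : Fin 11 → ℕ := ![0,0,0,0,0,1,2,3,4,5,1]

noncomputable def vp : Fin 11 → MvPowerSeries (Fin 2) ℝ := fun i => psX ^ pa i * psY ^ pb i

lemma sum_univ_eleven {M : Type*} [AddCommMonoid M] (f : Fin 11 → M) :
    ∑ i, f i = f 0 + f 1 + f 2 + f 3 + f 4 + f 5 + f 6 + f 7 + f 8 + f 9 + f 10 := by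
  rw [Fin.sum_univ_castSucc, Fin.sum_univ_castSucc, Fin.sum_univ_castSucc, Fin.sum_univ_eight]
  rfl

lemma pa0 : pa 0 = 0 := rfl
lemma pa1 : pa 1 = 1 := rfl
lemma pa2 : pa 2 = 2 := rfl
lemma pa3 : pa 3 = 3 := rfl
lemma pa4 : pa 4 = 4 := rfl
lemma pa5 : pa 5 = 0 := rfl
lemma pa6 : pa 6 = 0 := rfl
lemma pa7 : pa 7 = 0 := rfl
lemma pa8 : pa 8 = 0 := rfl
lemma pa9 : pa 9 = 0 := rfl
lemma pa10 : pa 10 = 1 := rfl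
lemma pb0 : pb 0 = 0 := rfl
lemma pb1 : pb 1 = 0 := rfl
lemma pb2 : pb 2 = 0 := rfl
lemma pb3 : pb 3 = 0 := rfl
lemma pb4 : pb 4 = 0 := rfl
lemma pb5 : pb 5 = 1 := rfl
lemma pb6 : pb 6 = 2 := rfl
lemma pb7 : pb 7 = 3 := rfl
lemma pb8 : pb 8 = 4 := rfl
lemma pb9 : pb 9 = 5 := rfl
lemma pb10 : pb 10 = 1 := rfl

lemma vb_eq (i : Fin 11) : vb i = mkq (vp i) := by
  fin_cases i
  · show (1 : Aq) = mkq (psX ^ 0 * psY ^ 0)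
    rw [pow_zero, pow_zero, one_mul, map_one]
  · show XX = mkq (psX ^ 1 * psY ^ 0)
    rw [pow_one, pow_zero, mul_one]
    rfl
  · show XX ^ 2 = mkq (psX ^ 2 * psY ^ 0)
    rw [pow_zero, mul_one, map_pow]
    rfl
  · show XX ^ 3 = mkq (psX ^ 3 * psY ^ 0)
    rw [pow_zero, mul_one, map_pow]
    rfl
  · show XX ^ 4 = mkq (psX ^ 4 * psY ^ 0)
    rw [pow_zero, mul_one, map_pow]
    rfl
  · show YY = mkq (psX ^ 0 * psY ^ 1)
    rw [pow_one, pow_zero, one_mul]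
    rfl
  · show YY ^ 2 = mkq (psX ^ 0 * psY ^ 2)
    rw [pow_zero, one_mul, map_pow]
    rfl
  · show YY ^ 3 = mkq (psX ^ 0 * psY ^ 3)
    rw [pow_zero, one_mul, map_pow]
    rfl
  · show YY ^ 4 = mkq (psX ^ 0 * psY ^ 4)
    rw [pow_zero, one_mul, map_pow]
    rfl
  · show YY ^ 5 = mkq (psX ^ 0 * psY ^ 5)
    rw [pow_zero, one_mul, map_pow]
    rfl
  · show XX * YY = mkq (psX ^ 1 * psY ^ 1)
    rw [pow_one, pow_one, map_mul]
    rfl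

lemma indep : LinearIndependent ℝ vb := by
  rw [Fintype.linearIndependent_iff]
  intro c hc
  have hmk : ∑ i, c i • vb i = mkq (∑ i, c i • vp i) := by
    rw [map_sum]
    congr 1
    ext i
    rw [vb_eq, map_smul]
  rw [hmk] at hc
  have hmem : (∑ i, c i • vp i) ∈ idealI := by
    rwa [mkq, Ideal.Quotient.mkₐ_eq_mk, Ideal.Quotient.eq_zero_iff_mem] at hc
  rw [idealI_eq, Ideal.mem_span_pair] at hmem
  obtain ⟨p, q, hpq⟩ := hmem
  have key : ∀ a b : ℕ, coeff (fd a b) (p * G1) + coeff (fd a b) (q * G2)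
      = ∑ i, c i * coeff (fd a b) (vp i) := by
    intro a b
    rw [← map_add, hpq, map_sum]
    exact Finset.sum_congr rfl fun i _ => MvPowerSeries.coeff_smul (vp i) _ (c i)
  have E : ∀ a b : ℕ,
      ((if fd 4 0 ≤ fd a b then coeff (fd a b - fd 4 0) p * 5 else 0) +
       (if fd 1 2 ≤ fd a b then coeff (fd a b - fd 1 2) p * 2 else 0)) +
      ((if fd 2 1 ≤ fd a b then coeff (fd a b - fd 2 1) q * 2 else 0) +
       (if fd 0 4 ≤ fd a b then coeff (fd a b - fd 0 4) q * 5 else 0))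
      = ∑ i, c i * (if a = pa i ∧ b = pb i then 1 else 0) := by
    intro a b
    rw [← coeff_G1, ← coeff_G2, key]
    congr 1
    ext i
    rw [vp, coeff_mono]
  have E00 := E 0 0
  have E10 := E 1 0
  have E01 := E 0 1
  have E20 := E 2 0
  have E11 := E 1 1
  have E02 := E 0 2
  have E30 := E 3 0
  have E03 := E 0 3
  have E12 := E 1 2
  have E40 := E 4 0
  have E21 := E 2 1
  have E04 := E 0 4
  have E50 := E 5 0
  have E22 := E 2 2
  have E05 := E 0 5
  norm_num [fd_le, fd_sub, sum_univ_eleven, pa0, pa1, pa2, pa3, pa4, pa5, pa6, pa7, pa8, pa9, pa10, pb0, pb1, pb2, pb3, pb4, pb5, pb6, pb7, pb8, pb9, pb10] at E00 E10 E01 E20 E11 E02 E30 E03 E12 E40 E21 E04 E50 E22 E05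
  intro i
  fin_cases i
  · show c 0 = 0; linarith
  · show c 1 = 0; linarith
  · show c 2 = 0; linarith
  · show c 3 = 0; linarith
  · show c 4 = 0; linarith
  · show c 5 = 0; linarith
  · show c 6 = 0; linarith
  · show c 7 = 0; linarith
  · show c 8 = 0; linarith
  · show c 9 = 0; linarith
  · show c 10 = 0; linarith


noncomputable def basisA : Module.Basis (Fin 11) ℝ Aq :=
  Module.Basis.mk indep (fun z _ => span_top z)

end Dim11


/-- The quotient `A = ℝ[[x,y]]/(5x⁴+2xy², 2x²y+5y⁴)` has dimension 11 as a real
vector space. -/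
theorem stmt_11 :
    Module.finrank ℝ (MvPowerSeries (Fin 2) ℝ ⧸ idealI) = 11 := by
  rw [Module.finrank_eq_card_basis Dim11.basisA]
  simp
end

section
/- Regard ℝ[[x₁,…,xₙ]] and ℝ[[y₁,…,yₘ]] as subrings of ℝ[[x₁,…,xₙ,y₁,…,yₘ]] in the canonical way. Let I be an ideal of ℝ[[x₁,…,xₙ]] and J an ideal of ℝ[[y₁,…,yₘ]]. If f ∈ ℝ[[x₁,…,xₙ]] with f ∉ I and g ∈ ℝ[[y₁,…,yₘ]] with g ∉ J, then the product f·g does not lie in the ideal of ℝ[[x₁,…,xₙ,y₁,…,yₘ]] generated by I ∪ J. -/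
open Classical

/-- The canonical inclusion `ℝ[[x₁,…,xₙ]] ⊆ ℝ[[x₁,…,xₙ,y₁,…,yₘ]]` (on coefficients). -/
noncomputable def inclX {n m : ℕ} (f : MvPowerSeries (Fin n) ℝ) :
    MvPowerSeries (Fin n ⊕ Fin m) ℝ :=
  fun d =>
    if h : ∃ e : Fin n →₀ ℕ,
        Finsupp.embDomain ⟨Sum.inl, Sum.inl_injective⟩ e = d then
      MvPowerSeries.coeff h.choose f
    else 0

/-- The canonical inclusion `ℝ[[y₁,…,yₘ]] ⊆ ℝ[[x₁,…,xₙ,y₁,…,yₘ]]` (on coefficients). -/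
noncomputable def inclY {n m : ℕ} (g : MvPowerSeries (Fin m) ℝ) :
    MvPowerSeries (Fin n ⊕ Fin m) ℝ :=
  fun d =>
    if h : ∃ e : Fin m →₀ ℕ,
        Finsupp.embDomain ⟨Sum.inr, Sum.inr_injective⟩ e = d then
      MvPowerSeries.coeff h.choose g
    else 0

section Aux

open MvPowerSeries

variable {n m : ℕ}

/-- Embedding of exponents in the x-variables. -/
noncomputable def exE (d : Fin n →₀ ℕ) : (Fin n ⊕ Fin m) →₀ ℕ :=
  Finsupp.embDomain ⟨Sum.inl, Sum.inl_injective⟩ d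

/-- Embedding of exponents in the y-variables. -/
noncomputable def eyE (e : Fin m →₀ ℕ) : (Fin n ⊕ Fin m) →₀ ℕ :=
  Finsupp.embDomain ⟨Sum.inr, Sum.inr_injective⟩ e

lemma exE_inl (d : Fin n →₀ ℕ) (a : Fin n) : (exE (m := m) d) (Sum.inl a) = d a :=
  Finsupp.embDomain_apply_self _ _ _

lemma exE_inr (d : Fin n →₀ ℕ) (b : Fin m) : (exE (m := m) d) (Sum.inr b) = 0 := by
  apply Finsupp.embDomain_notin_range
  rintro ⟨a, h⟩; exact Sum.inl_ne_inr h

lemma eyE_inr (e : Fin m →₀ ℕ) (b : Fin m) : (eyE (n := n) e) (Sum.inr b) = e b :=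
  Finsupp.embDomain_apply_self _ _ _

lemma eyE_inl (e : Fin m →₀ ℕ) (a : Fin n) : (eyE (n := n) e) (Sum.inl a) = 0 := by
  apply Finsupp.embDomain_notin_range
  rintro ⟨b, h⟩; exact Sum.inr_ne_inl h

lemma exE_add (d d' : Fin n →₀ ℕ) : exE (m := m) (d + d') = exE d + exE d' :=
  Finsupp.embDomain_add _ _ _

lemma eyE_add (e e' : Fin m →₀ ℕ) : eyE (n := n) (e + e') = eyE e + eyE e' :=
  Finsupp.embDomain_add _ _ _

lemma exE_zero : exE (n := n) (m := m) 0 = 0 := Finsupp.embDomain_zero _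

lemma eyE_zero : eyE (n := n) (m := m) 0 = 0 := Finsupp.embDomain_zero _

/-- x-part of an exponent. -/
noncomputable def kX (k : (Fin n ⊕ Fin m) →₀ ℕ) : Fin n →₀ ℕ :=
  (Finsupp.sumFinsuppAddEquivProdFinsupp k).1

/-- y-part of an exponent. -/
noncomputable def kY (k : (Fin n ⊕ Fin m) →₀ ℕ) : Fin m →₀ ℕ :=
  (Finsupp.sumFinsuppAddEquivProdFinsupp k).2

lemma kX_apply (k : (Fin n ⊕ Fin m) →₀ ℕ) (a : Fin n) : kX k a = k (Sum.inl a) :=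
  Finsupp.fst_sumFinsuppAddEquivProdFinsupp _ _

lemma kY_apply (k : (Fin n ⊕ Fin m) →₀ ℕ) (b : Fin m) : kY k b = k (Sum.inr b) :=
  Finsupp.snd_sumFinsuppAddEquivProdFinsupp _ _

lemma kX_add (k k' : (Fin n ⊕ Fin m) →₀ ℕ) : kX (k + k') = kX k + kX k' := by
  ext a; simp [kX_apply, Finsupp.add_apply]

lemma kY_add (k k' : (Fin n ⊕ Fin m) →₀ ℕ) : kY (k + k') = kY k + kY k' := by
  ext b; simp [kY_apply, Finsupp.add_apply]

lemma kX_mix (d : Fin n →₀ ℕ) (e : Fin m →₀ ℕ) : kX (exE d + eyE e) = d := by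
  ext a; rw [kX_apply, Finsupp.add_apply, exE_inl, eyE_inl, add_zero]

lemma kY_mix (d : Fin n →₀ ℕ) (e : Fin m →₀ ℕ) : kY (exE d + eyE e) = e := by
  ext b; rw [kY_apply, Finsupp.add_apply, exE_inr, eyE_inr, zero_add]

lemma decomp (k : (Fin n ⊕ Fin m) →₀ ℕ) : exE (kX k) + eyE (kY k) = k := by
  ext s
  cases s with
  | inl a => rw [Finsupp.add_apply, exE_inl, eyE_inl, add_zero, kX_apply]
  | inr b => rw [Finsupp.add_apply, exE_inr, eyE_inr, zero_add, kY_apply]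

lemma inclX_exE (f : MvPowerSeries (Fin n) ℝ) (d : Fin n →₀ ℕ) :
    coeff (exE (m := m) d) (inclX f) = coeff d f := by
  have h : ∃ e : Fin n →₀ ℕ,
      Finsupp.embDomain ⟨Sum.inl, Sum.inl_injective⟩ e = exE (m := m) d := ⟨d, rfl⟩
  have hd : h.choose = d := Finsupp.embDomain_injective _ h.choose_spec
  show dite _ _ _ = _
  rw [dif_pos h, hd]

lemma inclY_eyE (g : MvPowerSeries (Fin m) ℝ) (e : Fin m →₀ ℕ) :
    coeff (eyE (n := n) e) (inclY g) = coeff e g := by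
  have h : ∃ e' : Fin m →₀ ℕ,
      Finsupp.embDomain ⟨Sum.inr, Sum.inr_injective⟩ e' = eyE (n := n) e := ⟨e, rfl⟩
  have hd : h.choose = e := Finsupp.embDomain_injective _ h.choose_spec
  show dite _ _ _ = _
  rw [dif_pos h, hd]

lemma inclX_ne (f : MvPowerSeries (Fin n) ℝ) (d : Fin n →₀ ℕ) {e : Fin m →₀ ℕ}
    (he : e ≠ 0) : coeff (exE d + eyE e) (inclX f) = 0 := by
  show dite _ _ _ = _
  rw [dif_neg]
  rintro ⟨d', hd'⟩
  obtain ⟨b, hb⟩ : ∃ b, e b ≠ 0 := by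
    by_contra hc; push_neg at hc; exact he (Finsupp.ext hc)
  have h1 := DFunLike.congr_fun hd' (Sum.inr b)
  rw [Finsupp.add_apply, exE_inr, eyE_inr, zero_add] at h1
  have h0 : Finsupp.embDomain ⟨Sum.inl, Sum.inl_injective⟩ d' (Sum.inr b) = 0 := by
    apply Finsupp.embDomain_notin_range
    rintro ⟨a, h⟩; exact Sum.inl_ne_inr h
  rw [h0] at h1
  exact hb h1.symm

lemma inclY_ne (g : MvPowerSeries (Fin m) ℝ) {d : Fin n →₀ ℕ} (e : Fin m →₀ ℕ)
    (hd : d ≠ 0) : coeff (exE d + eyE e) (inclY g) = 0 := by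
  show dite _ _ _ = _
  rw [dif_neg]
  rintro ⟨e', he'⟩
  obtain ⟨a, ha⟩ : ∃ a, d a ≠ 0 := by
    by_contra hc; push_neg at hc; exact hd (Finsupp.ext hc)
  have h1 := DFunLike.congr_fun he' (Sum.inl a)
  rw [Finsupp.add_apply, exE_inl, eyE_inl, add_zero] at h1
  have h0 : Finsupp.embDomain ⟨Sum.inr, Sum.inr_injective⟩ e' (Sum.inl a) = 0 := by
    apply Finsupp.embDomain_notin_range
    rintro ⟨b, h⟩; exact Sum.inr_ne_inl h
  rw [h0] at h1
  exact ha h1.symm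

/-- The key antidiagonal decomposition for coefficients of products. -/
lemma coeff_mul_decomp (a b : MvPowerSeries (Fin n ⊕ Fin m) ℝ) (d : Fin n →₀ ℕ)
    (e : Fin m →₀ ℕ) :
    coeff (exE d + eyE e) (a * b) =
      ∑ p ∈ Finset.HasAntidiagonal.antidiagonal d, ∑ q ∈ Finset.HasAntidiagonal.antidiagonal e,
        coeff (exE p.1 + eyE q.1) a * coeff (exE p.2 + eyE q.2) b := by
  classical
  rw [MvPowerSeries.coeff_mul, ← Finset.sum_product']
  apply Finset.sum_nbij' (i := fun r => ((kX r.1, kX r.2), (kY r.1, kY r.2)))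
    (j := fun pq => (exE pq.1.1 + eyE pq.2.1, exE pq.1.2 + eyE pq.2.2))
  · rintro ⟨r1, r2⟩ hr
    rw [Finset.HasAntidiagonal.mem_antidiagonal] at hr
    rw [Finset.mem_product, Finset.HasAntidiagonal.mem_antidiagonal, Finset.HasAntidiagonal.mem_antidiagonal]
    constructor
    · show kX r1 + kX r2 = d
      rw [← kX_add, hr, kX_mix]
    · show kY r1 + kY r2 = e
      rw [← kY_add, hr, kY_mix]
  · rintro ⟨⟨d1, d2⟩, ⟨e1, e2⟩⟩ hpq
    rw [Finset.mem_product, Finset.HasAntidiagonal.mem_antidiagonal, Finset.HasAntidiagonal.mem_antidiagonal] at hpq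
    rw [Finset.HasAntidiagonal.mem_antidiagonal]
    show (exE d1 + eyE e1) + (exE d2 + eyE e2) = exE d + eyE e
    rw [← hpq.1, ← hpq.2, exE_add, eyE_add]
    abel
  · rintro ⟨r1, r2⟩ _
    show (exE (kX r1) + eyE (kY r1), exE (kX r2) + eyE (kY r2)) = (r1, r2)
    rw [decomp, decomp]
  · rintro ⟨⟨d1, d2⟩, ⟨e1, e2⟩⟩ _
    show (((kX (exE d1 + eyE e1), kX (exE d2 + eyE e2)), (kY (exE d1 + eyE e1),
      kY (exE d2 + eyE e2))) : ((Fin n →₀ ℕ) × (Fin n →₀ ℕ)) × ((Fin m →₀ ℕ) × (Fin m →₀ ℕ)))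
        = ((d1, d2), (e1, e2))
    rw [kX_mix, kX_mix, kY_mix, kY_mix]
  · rintro ⟨r1, r2⟩ _
    show coeff r1 a * coeff r2 b
      = coeff (exE (kX r1) + eyE (kY r1)) a * coeff (exE (kX r2) + eyE (kY r2)) b
    rw [decomp, decomp]

/-- The slice of a power series in `x`- and `y`-variables at a fixed `y`-exponent. -/
noncomputable def sliceY (a : MvPowerSeries (Fin n ⊕ Fin m) ℝ) (e : Fin m →₀ ℕ) :
    MvPowerSeries (Fin n) ℝ :=
  fun d => coeff (exE d + eyE e) a

lemma sliceY_coeff (a : MvPowerSeries (Fin n ⊕ Fin m) ℝ) (e : Fin m →₀ ℕ) (d : Fin n →₀ ℕ) :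
    coeff d (sliceY a e) = coeff (exE d + eyE e) a := rfl

lemma sliceY_add (u v : MvPowerSeries (Fin n ⊕ Fin m) ℝ) (e : Fin m →₀ ℕ) :
    sliceY (u + v) e = sliceY u e + sliceY v e := by
  apply MvPowerSeries.ext; intro d
  rw [map_add, sliceY_coeff, sliceY_coeff, sliceY_coeff, map_add]

lemma sliceY_zero (e : Fin m →₀ ℕ) :
    sliceY (0 : MvPowerSeries (Fin n ⊕ Fin m) ℝ) e = 0 := by
  apply MvPowerSeries.ext; intro d
  rw [sliceY_coeff, map_zero, map_zero]

lemma sliceY_mul_inclX (a : MvPowerSeries (Fin n ⊕ Fin m) ℝ) (i : MvPowerSeries (Fin n) ℝ)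
    (e : Fin m →₀ ℕ) :
    sliceY (a * inclX i) e = sliceY a e * i := by
  classical
  apply MvPowerSeries.ext; intro d
  rw [sliceY_coeff, coeff_mul_decomp, MvPowerSeries.coeff_mul]
  apply Finset.sum_congr rfl
  intro p _
  rw [Finset.sum_eq_single (e, (0 : Fin m →₀ ℕ))]
  · rw [eyE_zero, add_zero, inclX_exE, sliceY_coeff]
  · rintro ⟨q1, q2⟩ hq hne
    have hq2 : q2 ≠ 0 := by
      intro h0
      rw [Finset.HasAntidiagonal.mem_antidiagonal] at hq
      apply hne
      simp only [h0, add_zero] at hq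
      rw [hq, h0]
    rw [inclX_ne _ _ hq2, mul_zero]
  · intro h
    exact absurd (Finset.HasAntidiagonal.mem_antidiagonal.mpr (by rw [add_zero])) h

lemma coeff_mul_inclY (a : MvPowerSeries (Fin n ⊕ Fin m) ℝ) (j : MvPowerSeries (Fin m) ℝ)
    (d : Fin n →₀ ℕ) (e : Fin m →₀ ℕ) :
    coeff (exE d + eyE e) (a * inclY j)
      = ∑ q ∈ Finset.HasAntidiagonal.antidiagonal e, coeff (exE d + eyE q.1) a * coeff q.2 j := by
  classical
  rw [coeff_mul_decomp]
  rw [Finset.sum_eq_single ((d, (0 : Fin n →₀ ℕ)))]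
  · apply Finset.sum_congr rfl
    intro q _
    rw [exE_zero, zero_add, inclY_eyE]
  · rintro ⟨p1, p2⟩ hp hne
    have hp2 : p2 ≠ 0 := by
      intro h0
      rw [Finset.HasAntidiagonal.mem_antidiagonal] at hp
      apply hne
      simp only [h0, add_zero] at hp
      rw [hp, h0]
    apply Finset.sum_eq_zero
    intro q _
    rw [inclY_ne _ _ hp2, mul_zero]
  · intro h
    exact absurd (Finset.HasAntidiagonal.mem_antidiagonal.mpr (by rw [add_zero])) h

lemma sliceY_mul_inclY (a : MvPowerSeries (Fin n ⊕ Fin m) ℝ) (j : MvPowerSeries (Fin m) ℝ)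
    (e : Fin m →₀ ℕ) :
    sliceY (a * inclY j) e
      = ∑ q ∈ Finset.HasAntidiagonal.antidiagonal e, coeff q.2 j • sliceY a q.1 := by
  classical
  apply MvPowerSeries.ext; intro d
  rw [sliceY_coeff, coeff_mul_inclY, map_sum]
  apply Finset.sum_congr rfl
  intro q _
  rw [map_smul, smul_eq_mul, sliceY_coeff, mul_comm]

lemma sliceY_mul_incl (f : MvPowerSeries (Fin n) ℝ) (g : MvPowerSeries (Fin m) ℝ)
    (e : Fin m →₀ ℕ) :
    sliceY (inclX f * inclY g) e = coeff e g • f := by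
  classical
  apply MvPowerSeries.ext; intro d
  rw [sliceY_coeff, coeff_mul_inclY, map_smul, smul_eq_mul]
  rw [Finset.sum_eq_single (((0 : Fin m →₀ ℕ), e))]
  · rw [eyE_zero, add_zero, inclX_exE, mul_comm]
  · rintro ⟨q1, q2⟩ hq hne
    have hq1 : q1 ≠ 0 := by
      intro h0
      rw [Finset.HasAntidiagonal.mem_antidiagonal] at hq
      apply hne
      simp only [h0, zero_add] at hq
      rw [hq, h0]
    rw [inclX_ne _ _ hq1, zero_mul]
  · intro h
    exact absurd (Finset.HasAntidiagonal.mem_antidiagonal.mpr (by rw [zero_add])) h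

/-- Apply a functional to each `y`-slice, producing a power series in `y`. -/
noncomputable def Tm (φ : Module.Dual ℝ (MvPowerSeries (Fin n) ℝ))
    (a : MvPowerSeries (Fin n ⊕ Fin m) ℝ) : MvPowerSeries (Fin m) ℝ :=
  fun e => φ (sliceY a e)

lemma Tm_coeff (φ : Module.Dual ℝ (MvPowerSeries (Fin n) ℝ))
    (a : MvPowerSeries (Fin n ⊕ Fin m) ℝ) (e : Fin m →₀ ℕ) :
    coeff e (Tm φ a) = φ (sliceY a e) := rfl

lemma Tm_add (φ : Module.Dual ℝ (MvPowerSeries (Fin n) ℝ))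
    (u v : MvPowerSeries (Fin n ⊕ Fin m) ℝ) : Tm φ (u + v) = Tm φ u + Tm φ v := by
  apply MvPowerSeries.ext; intro e
  rw [map_add, Tm_coeff, Tm_coeff, Tm_coeff, sliceY_add, map_add]

lemma Tm_zero (φ : Module.Dual ℝ (MvPowerSeries (Fin n) ℝ)) :
    Tm (m := m) φ 0 = 0 := by
  apply MvPowerSeries.ext; intro e
  rw [Tm_coeff, sliceY_zero, map_zero, map_zero]

lemma Tm_mul_inclY (φ : Module.Dual ℝ (MvPowerSeries (Fin n) ℝ))
    (a : MvPowerSeries (Fin n ⊕ Fin m) ℝ) (j : MvPowerSeries (Fin m) ℝ) :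
    Tm φ (a * inclY j) = Tm φ a * j := by
  classical
  apply MvPowerSeries.ext; intro e
  rw [Tm_coeff, sliceY_mul_inclY, map_sum, MvPowerSeries.coeff_mul]
  apply Finset.sum_congr rfl
  intro q _
  rw [map_smul, smul_eq_mul, Tm_coeff, mul_comm]

lemma Tm_incl (φ : Module.Dual ℝ (MvPowerSeries (Fin n) ℝ))
    (f : MvPowerSeries (Fin n) ℝ) (g : MvPowerSeries (Fin m) ℝ) :
    Tm φ (inclX f * inclY g) = φ f • g := by
  apply MvPowerSeries.ext; intro e
  rw [Tm_coeff, sliceY_mul_incl, map_smul, smul_eq_mul, map_smul, smul_eq_mul, mul_comm]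

end Aux

/-- If `f ∈ ℝ[[x₁,…,xₙ]]` with `f ∉ I`, and `g ∈ ℝ[[y₁,…,yₘ]]` with `g ∉ J`, then `f·g`
does not lie in the ideal of `ℝ[[x₁,…,xₙ,y₁,…,yₘ]]` generated by `I ∪ J`. -/
theorem stmt_17 {n m : ℕ} (I : Ideal (MvPowerSeries (Fin n) ℝ))
    (J : Ideal (MvPowerSeries (Fin m) ℝ))
    (f : MvPowerSeries (Fin n) ℝ) (hf : f ∉ I)
    (g : MvPowerSeries (Fin m) ℝ) (hg : g ∉ J) :
    (inclX f) * (inclY g) ∉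
      Ideal.span (inclX '' (I : Set (MvPowerSeries (Fin n) ℝ)) ∪
        inclY '' (J : Set (MvPowerSeries (Fin m) ℝ))) := by
  classical
  intro hmem
  -- Construct a linear functional killing I but not f.
  obtain ⟨φ, hφI, hφf⟩ : ∃ φ : Module.Dual ℝ (MvPowerSeries (Fin n) ℝ),
      (∀ i ∈ I, φ i = 0) ∧ φ f ≠ 0 := by
    set W := I.restrictScalars ℝ with hW
    have hfW : W.mkQ f ≠ 0 := by
      rw [Submodule.mkQ_apply, ne_eq, Submodule.Quotient.mk_eq_zero]
      exact hf
    obtain ⟨φ₀, hφ₀⟩ : ∃ φ₀ : Module.Dual ℝ (MvPowerSeries (Fin n) ℝ ⧸ W),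
        φ₀ (W.mkQ f) ≠ 0 := by
      by_contra hc; push_neg at hc
      exact hfW ((Module.forall_dual_apply_eq_zero_iff ℝ _).mp hc)
    refine ⟨φ₀ ∘ₗ W.mkQ, ?_, hφ₀⟩
    intro i hi
    have h0 : W.mkQ i = 0 := by
      rw [Submodule.mkQ_apply, Submodule.Quotient.mk_eq_zero]
      exact hi
    simp [h0]
  obtain ⟨ψ, hψJ, hψg⟩ : ∃ ψ : Module.Dual ℝ (MvPowerSeries (Fin m) ℝ),
      (∀ j ∈ J, ψ j = 0) ∧ ψ g ≠ 0 := by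
    set W := J.restrictScalars ℝ with hW
    have hgW : W.mkQ g ≠ 0 := by
      rw [Submodule.mkQ_apply, ne_eq, Submodule.Quotient.mk_eq_zero]
      exact hg
    obtain ⟨ψ₀, hψ₀⟩ : ∃ ψ₀ : Module.Dual ℝ (MvPowerSeries (Fin m) ℝ ⧸ W),
        ψ₀ (W.mkQ g) ≠ 0 := by
      by_contra hc; push_neg at hc
      exact hgW ((Module.forall_dual_apply_eq_zero_iff ℝ _).mp hc)
    refine ⟨ψ₀ ∘ₗ W.mkQ, ?_, hψ₀⟩
    intro j hj
    have h0 : W.mkQ j = 0 := by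
      rw [Submodule.mkQ_apply, Submodule.Quotient.mk_eq_zero]
      exact hj
    simp [h0]
  -- The composite functional.
  set Φ : MvPowerSeries (Fin n ⊕ Fin m) ℝ → ℝ := fun a => ψ (Tm φ a) with hΦ
  -- Φ vanishes on multiples of generators.
  have hgenX : ∀ i ∈ I, ∀ a, Φ (a * inclX i) = 0 := by
    intro i hi a
    have h1 : Tm φ (a * inclX i) = 0 := by
      apply MvPowerSeries.ext; intro e
      rw [Tm_coeff, sliceY_mul_inclX, map_zero]
      exact hφI _ (I.mul_mem_left _ hi)
    show ψ (Tm φ (a * inclX i)) = 0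
    rw [h1, map_zero]
  have hgenY : ∀ j ∈ J, ∀ a, Φ (a * inclY j) = 0 := by
    intro j hj a
    show ψ (Tm φ (a * inclY j)) = 0
    rw [Tm_mul_inclY]
    exact hψJ _ (J.mul_mem_left _ hj)
  have hΦadd : ∀ u v : MvPowerSeries (Fin n ⊕ Fin m) ℝ, Φ (u + v) = Φ u + Φ v := by
    intro u v
    show ψ (Tm φ (u + v)) = ψ (Tm φ u) + ψ (Tm φ v)
    rw [Tm_add, map_add]
  have hΦzero : Φ 0 = 0 := by
    show ψ (Tm φ 0) = 0
    rw [Tm_zero, map_zero]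
  -- The ideal of elements all of whose multiples are killed by Φ.
  set K : Ideal (MvPowerSeries (Fin n ⊕ Fin m) ℝ) :=
    { carrier := {h | ∀ a, Φ (a * h) = 0}
      add_mem' := by
        intro x y hx hy a
        rw [mul_add, hΦadd, hx a, hy a, add_zero]
      zero_mem' := by
        intro a
        rw [mul_zero, hΦzero]
      smul_mem' := by
        intro c x hx a
        rw [smul_eq_mul, ← mul_assoc]
        exact hx (a * c) } with hK
  have hspan : Ideal.span (inclX '' (I : Set (MvPowerSeries (Fin n) ℝ)) ∪
      inclY '' (J : Set (MvPowerSeries (Fin m) ℝ))) ≤ K := by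
    rw [Ideal.span_le]
    rintro x (⟨i, hi, rfl⟩ | ⟨j, hj, rfl⟩)
    · exact fun a => hgenX i hi a
    · exact fun a => hgenY j hj a
  have hfg := hspan hmem 1
  rw [one_mul] at hfg
  have hval : Φ (inclX f * inclY g) = φ f * ψ g := by
    show ψ (Tm φ (inclX f * inclY g)) = φ f * ψ g
    rw [Tm_incl, map_smul, smul_eq_mul]
  rw [hval] at hfg
  exact mul_ne_zero hφf hψg hfg
end
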